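/- arXiv:2410.15070 — 6 statements merged into one kernel-verified Lean document; each statement's English description precedes it below -/
import Mathlib

section
/- Let p ≥ 2 and let i, s be positive integers with m = gcd(i, s). Then gcd(p^i + 1, p^s + 1) = p^m + 1 if both i/m and s/m are odd; otherwise gcd(p^i + 1, p^s + 1) = 1 if p is even, and gcd(p^i + 1, p^s + 1) = 2 if p is odd. -/
theorem stmt0 (p i s m : ℕ) (hp : 2 ≤ p) (hi : 0 < i) (hs : 0 < s)
    (hm : m = Nat.gcd i s) :
    ((Odd (i / m) ∧ Odd (s / m)) → Nat.gcd (p ^ i + 1) (p ^ s + 1) = p ^ m + 1) ∧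
    (¬(Odd (i / m) ∧ Odd (s / m)) →
      ((Even p → Nat.gcd (p ^ i + 1) (p ^ s + 1) = 1) ∧
       (Odd p → Nat.gcd (p ^ i + 1) (p ^ s + 1) = 2))) := by
  subst hm
  have hgpos : 0 < Nat.gcd i s := Nat.gcd_pos_of_pos_left s hi
  set m := Nat.gcd i s with hm
  set a := i / m with ha
  set b := s / m with hb
  have hia : m * a = i := Nat.mul_div_cancel' (Nat.gcd_dvd_left i s)
  have hsb : m * b = s := Nat.mul_div_cancel' (Nat.gcd_dvd_right i s)
  have hco : Nat.Coprime a b := Nat.coprime_div_gcd_div_gcd hgpos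
  set d := Nat.gcd (p ^ i + 1) (p ^ s + 1) with hd
  have hdi : d ∣ p ^ i + 1 := Nat.gcd_dvd_left _ _
  have hds : d ∣ p ^ s + 1 := Nat.gcd_dvd_right _ _
  have h1 : ((p : ZMod d)) ^ i = -1 := by
    have h0 : ((p ^ i + 1 : ℕ) : ZMod d) = 0 :=
      (ZMod.natCast_eq_zero_iff _ _).2 hdi
    push_cast at h0
    exact eq_neg_of_add_eq_zero_left h0
  have h2 : ((p : ZMod d)) ^ s = -1 := by
    have h0 : ((p ^ s + 1 : ℕ) : ZMod d) = 0 :=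
      (ZMod.natCast_eq_zero_iff _ _).2 hds
    push_cast at h0
    exact eq_neg_of_add_eq_zero_left h0
  have h3 : (((p : ZMod d)) ^ m) ^ 2 = 1 := by
    have e1 : ((p : ZMod d)) ^ (2 * i) = 1 := by
      rw [two_mul, pow_add, h1]; ring
    have e2 : ((p : ZMod d)) ^ (2 * s) = 1 := by
      rw [two_mul, pow_add, h2]; ring
    have := (pow_gcd_eq_one (a := (p : ZMod d))).2 ⟨e1, e2⟩
    rw [Nat.gcd_mul_left, ← hm] at this
    rw [← pow_mul, mul_comm]
    exact this
  have key : ∀ t : ℕ, Even t → ((p : ZMod d)) ^ (m * t) = 1 := by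
    rintro t ⟨k, rfl⟩
    rw [show m * (k + k) = m * 2 * k by ring, pow_mul, pow_mul, h3, one_pow]
  constructor
  · rintro ⟨hoa, hob⟩
    -- d ∣ p ^ m + 1
    have hxm : ((p : ZMod d)) ^ m = -1 := by
      obtain ⟨k, hk⟩ := hoa
      have : ((p : ZMod d)) ^ (m * a) = -1 := by rw [hia]; exact h1
      rw [hk, show m * (2 * k + 1) = m * 2 * k + m by ring, pow_add, pow_mul,
        pow_mul, h3, one_pow, one_mul] at this
      exact this
    have hdvd : d ∣ p ^ m + 1 := by
      rw [← ZMod.natCast_eq_zero_iff]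
      push_cast
      rw [hxm]; ring
    have hdvd2 : p ^ m + 1 ∣ p ^ i + 1 := by
      have := hoa.nat_add_dvd_pow_add_pow (p ^ m) 1
      rwa [one_pow, ← pow_mul, hia] at this
    have hdvd3 : p ^ m + 1 ∣ p ^ s + 1 := by
      have := hob.nat_add_dvd_pow_add_pow (p ^ m) 1
      rwa [one_pow, ← pow_mul, hsb] at this
    exact Nat.dvd_antisymm hdvd (Nat.dvd_gcd hdvd2 hdvd3)
  · intro hno
    have hd2 : d ∣ 2 := by
      have heo : Even a ∨ Even b := by
        rcases Nat.even_or_odd a with h | h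
        · exact Or.inl h
        rcases Nat.even_or_odd b with h' | h'
        · exact Or.inr h'
        exact absurd ⟨h, h'⟩ hno
      have hone : (1 : ZMod d) = -1 := by
        rcases heo with h | h
        · have := key a h; rw [hia, h1] at this; exact this.symm
        · have := key b h; rw [hsb, h2] at this; exact this.symm
      have : ((2 : ℕ) : ZMod d) = 0 := by
        push_cast
        linear_combination hone
      exact (ZMod.natCast_eq_zero_iff _ _).1 this
    constructor
    · intro hpe
      have hodd : ¬ 2 ∣ p ^ i + 1 := by
        obtain ⟨k, rfl⟩ := hpe
        have : 2 ∣ (k + k) ^ i := dvd_pow (by omega) hi.ne'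
        omega
      rcases (Nat.dvd_prime Nat.prime_two).1 hd2 with h | h
      · exact h
      · exact absurd (h ▸ hdi) hodd
    · intro hpo
      have h2i : 2 ∣ p ^ i + 1 := (hpo.pow.add_one).two_dvd
      have h2s : 2 ∣ p ^ s + 1 := (hpo.pow.add_one).two_dvd
      exact Nat.dvd_antisymm hd2 (Nat.dvd_gcd h2i h2s)
end

section
/- Let p be a prime, s > 1 an integer, q = p^s, and let i be an integer with 0 < i < s and m = gcd(i, s). For every pair (a, b) ∈ F_{q^2} × F_{q^2} with (a, b) ≠ (0, 0), the number of u ∈ U_{q+1} satisfying a + b·u + b^q·u^{p^i} + a^q·u^{p^i + 1} = 0 belongs to the set {0, 1, 2, p^m + 1}. -/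
lemma fixpow_mul {K : Type} [CommMonoid K] (p a : ℕ) (t : K) (h : t ^ p ^ a = t) :
    ∀ k : ℕ, t ^ p ^ (a * k) = t := by
  intro k
  induction k with
  | zero => simp
  | succ n ih => rw [Nat.mul_succ, pow_add, pow_mul, ih, h]

lemma fixpow_dvd {K : Type} [CommMonoid K] (p a c : ℕ) (t : K) (h : t ^ p ^ a = t)
    (hd : a ∣ c) : t ^ p ^ c = t := by
  obtain ⟨k, rfl⟩ := hd
  exact fixpow_mul p a t h k

lemma fixpow_gcd {K : Type} [CommMonoid K] (p : ℕ) (t : K) :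
    ∀ i s : ℕ, t ^ p ^ i = t → t ^ p ^ s = t → t ^ p ^ (Nat.gcd i s) = t := by
  intro i s
  induction i, s using Nat.gcd.induction with
  | H0 n => intro _ h2; simpa using h2
  | H1 m n hm ih =>
    intro h1 h2
    rw [Nat.gcd_rec]
    apply ih _ h1
    have hn : m * (n / m) + n % m = n := Nat.div_add_mod n m
    calc t ^ p ^ (n % m) = (t ^ p ^ (m * (n / m))) ^ p ^ (n % m) := by
          rw [fixpow_mul p m t h1]
      _ = t ^ p ^ (m * (n / m) + n % m) := by rw [pow_add]; exact (pow_mul t _ _).symm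
      _ = t := by rw [hn, h2]

open Polynomial in
lemma ncard_fix_pow (K : Type) [Field K] [Fintype K] (p r j : ℕ) (hp : p.Prime)
    (hcard : Fintype.card K = p ^ r) (hj : 0 < j) (hjr : j ∣ r) :
    {z : K | z ^ p ^ j = z}.ncard = p ^ j := by
  classical
  set n : ℕ := p ^ j - 1 with hn
  have hpj1 : 1 ≤ p ^ j := Nat.one_le_pow _ _ hp.pos
  have hn1 : n + 1 = p ^ j := by omega
  have hnpos : 0 < n := by
    have h2 : 2 ≤ p := hp.two_le
    have h3 : 2 ^ j ≤ p ^ j := Nat.pow_le_pow_left h2 j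
    have h4 : 2 ^ 1 ≤ 2 ^ j := Nat.pow_le_pow_right (by norm_num) hj
    omega
  have hNdvd : n ∣ Fintype.card Kˣ := by
    rw [Fintype.card_units, hcard]
    obtain ⟨k, rfl⟩ := hjr
    have := Nat.sub_dvd_pow_sub_pow (p ^ j) 1 k
    simpa [← pow_mul] using this
  obtain ⟨g, hg⟩ := IsCyclic.exists_ofOrder_eq_natCard (α := Kˣ)
  rw [Nat.card_eq_fintype_card] at hg
  have hgord : orderOf g ≠ 0 := by rw [hg]; exact Fintype.card_ne_zero
  have hordx : orderOf (g ^ (orderOf g / n)) = n :=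
    orderOf_pow_orderOf_div hgord (by rw [hg]; exact hNdvd)
  have hprim : IsPrimitiveRoot ((g ^ (orderOf g / n) : Kˣ) : K) n := by
    rw [IsPrimitiveRoot.coe_units_iff]
    have h := IsPrimitiveRoot.orderOf (g ^ (orderOf g / n))
    rwa [hordx] at h
  have hroots : (nthRootsFinset n (1 : K)).card = n := hprim.card_nthRootsFinset
  have hset : {z : K | z ^ p ^ j = z} = insert (0 : K) ↑(nthRootsFinset n (1 : K)) := by
    ext z
    simp only [Set.mem_setOf_eq, Set.mem_insert_iff, Finset.coe_insert, Finset.mem_coe,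
      mem_nthRootsFinset hnpos (1 : K)]
    constructor
    · intro h
      by_cases hz : z = 0
      · exact Or.inl hz
      · right
        have : z ^ n * z = 1 * z := by rw [one_mul, ← pow_succ, hn1, h]
        exact mul_right_cancel₀ hz this
    · rintro (rfl | h)
      · rw [zero_pow]; omega
      · rw [← hn1, pow_succ, h, one_mul]
  rw [hset, Set.ncard_insert_of_notMem, Set.ncard_coe_finset, hroots, hn1]
  rw [Finset.mem_coe, mem_nthRootsFinset hnpos (1 : K), zero_pow hnpos.ne']
  exact fun h => zero_ne_one h

set_option maxHeartbeats 1600000 in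
lemma main_count (p s i : ℕ) (hp : p.Prime) (hi0 : 0 < i) (hs0 : 0 < s)
    (K : Type) [Field K] [Fintype K] (hK : Fintype.card K = (p ^ s) ^ 2)
    (a b : K) (hab : ¬(a = 0 ∧ b = 0)) (u1 u2 u3 : K)
    (h12 : u1 ≠ u2) (h13 : u1 ≠ u3) (h23 : u2 ≠ u3)
    (hu1 : u1 ∈ {u : K | u ^ (p ^ s + 1) = 1 ∧
        a + b * u + b ^ (p ^ s) * u ^ (p ^ i) + a ^ (p ^ s) * u ^ (p ^ i + 1) = 0})
    (hu2 : u2 ∈ {u : K | u ^ (p ^ s + 1) = 1 ∧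
        a + b * u + b ^ (p ^ s) * u ^ (p ^ i) + a ^ (p ^ s) * u ^ (p ^ i + 1) = 0})
    (hu3 : u3 ∈ {u : K | u ^ (p ^ s + 1) = 1 ∧
        a + b * u + b ^ (p ^ s) * u ^ (p ^ i) + a ^ (p ^ s) * u ^ (p ^ i + 1) = 0}) :
    ({u : K | u ^ (p ^ s + 1) = 1 ∧
        a + b * u + b ^ (p ^ s) * u ^ (p ^ i) + a ^ (p ^ s) * u ^ (p ^ i + 1) = 0}).ncard
      = p ^ (Nat.gcd i s) + 1 := by
  classical
  have hchar : CharP K p := by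
    obtain ⟨r, hr⟩ := CharP.exists K
    haveI := hr
    obtain ⟨n, hrp, hcard⟩ := FiniteField.card K r
    have hpr : p = r := by
      have h1 : p ∣ r ^ (n : ℕ) := by
        rw [← hcard, hK]
        exact dvd_pow (dvd_pow_self p hs0.ne') (by norm_num)
      exact (Nat.prime_dvd_prime_iff_eq hp hrp).mp (hp.dvd_of_dvd_pow h1)
    rwa [hpr]
  haveI := hchar
  haveI := Fact.mk hp
  have hpsne : (p : ℕ) ^ s ≠ 0 := pow_ne_zero s hp.pos.ne'
  have hpine : (p : ℕ) ^ i ≠ 0 := pow_ne_zero i hp.pos.ne'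
  set S : Set K := {u : K | u ^ (p ^ s + 1) = 1 ∧
        a + b * u + b ^ (p ^ s) * u ^ (p ^ i) + a ^ (p ^ s) * u ^ (p ^ i + 1) = 0} with hSdef
  set A := a ^ p ^ s with hA
  set B := b ^ p ^ s with hB
  have hinj : ∀ x y : K, x ^ p ^ i = y ^ p ^ i → x = y := by
    intro x y h
    have h0 : (x - y) ^ p ^ i = 0 := by rw [sub_pow_char_pow, h, sub_self]
    have h1 := pow_eq_zero_iff hpine |>.mp h0
    exact sub_eq_zero.mp h1
  have hcirc : ∀ u : K, u ∈ S → u ≠ 0 ∧ u ^ p ^ s = u⁻¹ := by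
    intro u hu
    have h1 : u ^ p ^ s * u = 1 := by
      have := hu.1
      rwa [pow_succ] at this
    refine ⟨fun h => ?_, eq_inv_of_mul_eq_one_left h1⟩
    rw [h, mul_zero] at h1; exact zero_ne_one h1
  have hEmem : ∀ u : K, u ∈ S ↔ (u ^ (p ^ s + 1) = 1 ∧
      a + b * u + B * u ^ p ^ i + A * u ^ p ^ i * u = 0) := by
    intro u
    rw [hSdef]
    simp only [Set.mem_setOf_eq, pow_succ, mul_assoc]
  obtain ⟨hcu1, hE1⟩ := (hEmem u1).mp hu1
  obtain ⟨hcu2, hE2⟩ := (hEmem u2).mp hu2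
  obtain ⟨hcu3, hE3⟩ := (hEmem u3).mp hu3
  obtain ⟨h10, h1q⟩ := hcirc u1 hu1
  obtain ⟨h20, h2q⟩ := hcirc u2 hu2
  obtain ⟨h30, h3q⟩ := hcirc u3 hu3
  by_cases hdet : a * A = b * B
  · -- singular case: contradiction with three distinct roots
    exfalso
    have hb : b ≠ 0 := by
      intro hb0
      have ha0 : a ≠ 0 := fun h => hab ⟨h, hb0⟩
      have hB0 : B = 0 := by rw [hB, hb0, zero_pow hpsne]
      have hA0 : A = 0 := by
        rcases mul_eq_zero.mp (by rw [hdet, hB0, mul_zero] : a * A = 0) with h | h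
        · exact absurd h ha0
        · exact h
      rw [hA] at hA0
      exact ha0 (pow_eq_zero_iff hpsne |>.mp hA0)
    have hfact : ∀ u : K, u ∈ S → (A * u ^ p ^ i + b = 0 ∨ b * u + a = 0) := by
      intro u hu
      have hE := ((hEmem u).mp hu).2
      have h0 : (A * u ^ p ^ i + b) * (b * u + a) = 0 := by
        linear_combination u ^ p ^ i * hdet + b * hE
      exact mul_eq_zero.mp h0
    have hlam : ∀ u v : K, A * u ^ p ^ i + b = 0 → A * v ^ p ^ i + b = 0 → u = v := by
      intro u v h1 h2
      have hAne : A ≠ 0 := by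
        intro h
        rw [h, zero_mul, zero_add] at h1
        exact hb h1
      apply hinj
      apply mul_left_cancel₀ hAne
      linear_combination h1 - h2
    have hrho : ∀ u v : K, b * u + a = 0 → b * v + a = 0 → u = v := by
      intro u v h1 h2
      apply mul_left_cancel₀ hb
      linear_combination h1 - h2
    rcases hfact u1 hu1 with k1 | k1 <;> rcases hfact u2 hu2 with k2 | k2 <;>
      rcases hfact u3 hu3 with k3 | k3
    · exact h12 (hlam u1 u2 k1 k2)
    · exact h12 (hlam u1 u2 k1 k2)
    · exact h13 (hlam u1 u3 k1 k3)
    · exact h23 (hrho u2 u3 k2 k3)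
    · exact h23 (hlam u2 u3 k2 k3)
    · exact h13 (hrho u1 u3 k1 k3)
    · exact h12 (hrho u1 u2 k1 k2)
    · exact h12 (hrho u1 u2 k1 k2)
  · -- invertible case
    set l1 := A * u1 ^ p ^ i + b with hl1
    set l2 := A * u2 ^ p ^ i + b with hl2
    have hlne : ∀ u : K, u ∈ S → A * u ^ p ^ i + b ≠ 0 := by
      intro u hu hl0
      have hE := ((hEmem u).mp hu).2
      have hBu : B * u ^ p ^ i + a = 0 := by linear_combination hE - u * hl0
      exact hdet (by linear_combination A * hBu - B * hl0)
    have hl1ne : l1 ≠ 0 := hlne u1 hu1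
    have hl2ne : l2 ≠ 0 := hlne u2 hu2
    have hU12 : u1 ^ p ^ i - u2 ^ p ^ i ≠ 0 :=
      sub_ne_zero.mpr (fun h => h12 (hinj _ _ h))
    have key : ∀ u : K,
        (a + b * u + B * u ^ p ^ i + A * u ^ p ^ i * u = 0) ↔
        (u ^ p ^ i - u2 ^ p ^ i) * l1 * (u1 - u) =
          (u1 ^ p ^ i - u ^ p ^ i) * l2 * (u - u2) := by
      intro u
      constructor
      · intro h
        linear_combination (-(u1 ^ p ^ i - u2 ^ p ^ i)) * h +
          (u ^ p ^ i - u2 ^ p ^ i) * hE1 + (u1 ^ p ^ i - u ^ p ^ i) * hE2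
      · intro h
        have h2 : (u1 ^ p ^ i - u2 ^ p ^ i) *
            (a + b * u + B * u ^ p ^ i + A * u ^ p ^ i * u) = 0 := by
          linear_combination (- h) + (u ^ p ^ i - u2 ^ p ^ i) * hE1 +
            (u1 ^ p ^ i - u ^ p ^ i) * hE2
        rcases mul_eq_zero.mp h2 with h3 | h3
        · exact absurd h3 hU12
        · exact h3
    have hR : (u3 ^ p ^ i - u2 ^ p ^ i) * l1 * (u1 - u3) =
        (u1 ^ p ^ i - u3 ^ p ^ i) * l2 * (u3 - u2) := (key u3).mp hE3
    have hc1ne : u3 - u2 ≠ 0 := sub_ne_zero.mpr (Ne.symm h23)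
    have hc2ne : u1 - u3 ≠ 0 := sub_ne_zero.mpr h13
    have h12ne : u1 - u2 ≠ 0 := sub_ne_zero.mpr h12
    set m := Nat.gcd i s with hm
    set F : Set K := {z : K | z ^ p ^ m = z} with hF
    set g : K → K := fun u => ((u - u2) * (u1 - u3)) / ((u1 - u) * (u3 - u2)) with hg
    have himg : g '' (S \ {u1}) = F := by
      apply subset_antisymm
      · rintro _ ⟨u, ⟨hu, hne1⟩, rfl⟩
        have hne1' : u ≠ u1 := fun h => hne1 (by simp [h])
        obtain ⟨hu0, huq⟩ := hcirc u hu
        have hE := ((hEmem u).mp hu).2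
        have hYne : (u1 - u) * (u3 - u2) ≠ 0 :=
          mul_ne_zero (sub_ne_zero.mpr (Ne.symm hne1')) hc1ne
        have hd : (u ^ p ^ i - u2 ^ p ^ i) * l1 * (u1 - u) =
            (u1 ^ p ^ i - u ^ p ^ i) * l2 * (u - u2) := (key u).mp hE
        have hXY : ((u - u2) * (u1 - u3)) ^ p ^ i * ((u1 - u) * (u3 - u2)) =
            ((u1 - u) * (u3 - u2)) ^ p ^ i * ((u - u2) * (u1 - u3)) := by
          rw [mul_pow, mul_pow, sub_pow_char_pow, sub_pow_char_pow,
            sub_pow_char_pow, sub_pow_char_pow]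
          apply mul_left_cancel₀ (mul_ne_zero hl1ne hl2ne)
          linear_combination ((u1 ^ p ^ i - u3 ^ p ^ i) * l2 * (u3 - u2)) * hd -
            ((u1 ^ p ^ i - u ^ p ^ i) * l2 * (u - u2)) * hR
        have hXYq : ((u - u2) * (u1 - u3)) ^ p ^ s * ((u1 - u) * (u3 - u2)) =
            ((u1 - u) * (u3 - u2)) ^ p ^ s * ((u - u2) * (u1 - u3)) := by
          rw [mul_pow, mul_pow, sub_pow_char_pow, sub_pow_char_pow,
            sub_pow_char_pow, sub_pow_char_pow, huq, h1q, h2q, h3q]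
          field_simp
          ring
        have hti : (g u) ^ p ^ i = g u := by
          rw [hg]
          simp only
          rw [div_pow, div_eq_div_iff (pow_ne_zero _ hYne) hYne]
          linear_combination hXY
        have hts : (g u) ^ p ^ s = g u := by
          rw [hg]
          simp only
          rw [div_pow, div_eq_div_iff (pow_ne_zero _ hYne) hYne]
          linear_combination hXYq
        exact fixpow_gcd p (g u) i s hti hts
      · intro t0 ht0
        have ht0' : t0 ^ p ^ m = t0 := ht0
        have hti : t0 ^ p ^ i = t0 := fixpow_dvd p m i t0 ht0' (Nat.gcd_dvd_left i s)
        have hts : t0 ^ p ^ s = t0 := fixpow_dvd p m s t0 ht0' (Nat.gcd_dvd_right i s)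
        set D := (u3 - u2) * t0 + (u1 - u3) with hD
        set N := (u3 - u2) * u1 * t0 + (u1 - u3) * u2 with hN
        have hDq : D ^ p ^ s = (u3⁻¹ - u2⁻¹) * t0 + (u1⁻¹ - u3⁻¹) := by
          rw [hD, add_pow_char_pow]
          simp only [mul_pow, sub_pow_char_pow]
          rw [hts, h1q, h2q, h3q]
        have hNq : N ^ p ^ s = (u3⁻¹ - u2⁻¹) * u1⁻¹ * t0 + (u1⁻¹ - u3⁻¹) * u2⁻¹ := by
          rw [hN, add_pow_char_pow]
          simp only [mul_pow, sub_pow_char_pow]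
          rw [hts, h1q, h2q, h3q]
        have hNq' : N ^ p ^ s * (u1 * u2 * u3) = - D := by
          rw [hNq, hD]
          field_simp
          ring
        have hDq' : D ^ p ^ s * (u1 * u2 * u3) = - N := by
          rw [hDq, hN]
          field_simp
          ring
        have hDN : D = 0 → N = 0 := by
          intro h0
          have := hDq'
          rw [h0, zero_pow hpsne, zero_mul] at this
          linear_combination this
        have hDne : D ≠ 0 := by
          intro hD0
          have hN0 : N = 0 := hDN hD0
          have hD0' : (u3 - u2) * t0 + (u1 - u3) = 0 := by rw [← hD]; exact hD0
          have hN0' : (u3 - u2) * u1 * t0 + (u1 - u3) * u2 = 0 := by rw [← hN]; exact hN0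
          have hz : (u1 - u3) * (u2 - u1) = 0 := by
            linear_combination hN0' - u1 * hD0'
          rcases mul_eq_zero.mp hz with h | h
          · exact hc2ne h
          · exact h12ne (by linear_combination - h)
        have hNne : N ≠ 0 := by
          intro hN0
          have := hNq'
          rw [hN0, zero_pow hpsne, zero_mul] at this
          exact hDne (by linear_combination this)
        set u := N / D with hu
        have hDu : D * u = N := by rw [hu]; field_simp
        have hx : D * (u - u2) = (u3 - u2) * t0 * (u1 - u2) := by
          rw [mul_sub, hDu, hN, hD]; ring
        have hy : D * (u1 - u) = (u1 - u3) * (u1 - u2) := by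
          rw [mul_sub, hDu, hN, hD]; ring
        have hune1 : u ≠ u1 := by
          intro h
          have hz : (u1 - u3) * (u2 - u1) = 0 := by
            have h' : D * u1 = N := by rw [← h, hDu]
            rw [hN, hD] at h'
            linear_combination - h'
          rcases mul_eq_zero.mp hz with h' | h'
          · exact hc2ne h'
          · exact h12ne (by linear_combination - h')
        have hu0 : u ≠ 0 := by
          rw [hu]
          exact div_ne_zero hNne hDne
        have hucirc : u ^ (p ^ s + 1) = 1 := by
          have h123 : u1 * u2 * u3 ≠ 0 := mul_ne_zero (mul_ne_zero h10 h20) h30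
          have hDqne : D ^ p ^ s ≠ 0 := pow_ne_zero _ hDne
          rw [pow_succ, hu, div_pow, div_mul_div_comm,
            div_eq_one_iff_eq (mul_ne_zero hDqne hDne)]
          apply mul_right_cancel₀ h123
          linear_combination N * hNq' - D * hDq'
        have hDpne : D ^ p ^ i ≠ 0 := pow_ne_zero _ hDne
        have hphix : D ^ p ^ i * (u ^ p ^ i - u2 ^ p ^ i) =
            (u3 ^ p ^ i - u2 ^ p ^ i) * t0 * (u1 ^ p ^ i - u2 ^ p ^ i) := by
          have h' := congrArg (fun z : K => z ^ p ^ i) hx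
          rw [mul_pow, mul_pow, mul_pow, sub_pow_char_pow, sub_pow_char_pow,
            sub_pow_char_pow, hti] at h'
          exact h'
        have hphiy : D ^ p ^ i * (u1 ^ p ^ i - u ^ p ^ i) =
            (u1 ^ p ^ i - u3 ^ p ^ i) * (u1 ^ p ^ i - u2 ^ p ^ i) := by
          have h' := congrArg (fun z : K => z ^ p ^ i) hy
          rw [mul_pow, mul_pow, sub_pow_char_pow, sub_pow_char_pow,
            sub_pow_char_pow] at h'
          exact h'
        have hEu : a + b * u + B * u ^ p ^ i + A * u ^ p ^ i * u = 0 := by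
          rw [key u]
          apply mul_right_cancel₀ (mul_ne_zero hDpne hDne)
          linear_combination (l1 * (u1 - u) * D) * hphix +
            (l1 * ((u3 ^ p ^ i - u2 ^ p ^ i) * t0 * (u1 ^ p ^ i - u2 ^ p ^ i))) * hy -
            (l2 * (u - u2) * D) * hphiy -
            (l2 * ((u1 ^ p ^ i - u3 ^ p ^ i) * (u1 ^ p ^ i - u2 ^ p ^ i))) * hx +
            (t0 * (u1 ^ p ^ i - u2 ^ p ^ i) * (u1 - u2)) * hR
        have hYne : (u1 - u) * (u3 - u2) ≠ 0 :=
          mul_ne_zero (sub_ne_zero.mpr (Ne.symm hune1)) hc1ne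
        have hgu : g u = t0 := by
          rw [hg]
          simp only
          rw [div_eq_iff hYne]
          apply mul_left_cancel₀ hDne
          linear_combination (u1 - u3) * hx - (t0 * (u3 - u2)) * hy
        exact ⟨u, ⟨(hEmem u).mpr ⟨hucirc, hEu⟩, fun h => hune1 (by simpa using h)⟩, hgu⟩
    have hinjOn : Set.InjOn g (S \ {u1}) := by
      rintro u ⟨hu, hne1⟩ w ⟨hw, hne1'⟩ heq
      have hnu : u ≠ u1 := fun h => hne1 (by simp [h])
      have hnw : w ≠ u1 := fun h => hne1' (by simp [h])
      have hYu : (u1 - u) * (u3 - u2) ≠ 0 :=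
        mul_ne_zero (sub_ne_zero.mpr (Ne.symm hnu)) hc1ne
      have hYw : (u1 - w) * (u3 - u2) ≠ 0 :=
        mul_ne_zero (sub_ne_zero.mpr (Ne.symm hnw)) hc1ne
      rw [hg] at heq
      simp only at heq
      rw [div_eq_div_iff hYu hYw] at heq
      have hz : (u - w) * ((u1 - u2) * ((u1 - u3) * (u3 - u2))) = 0 := by
        linear_combination heq
      rcases mul_eq_zero.mp hz with h | h
      · exact sub_eq_zero.mp h
      · rcases mul_eq_zero.mp h with h' | h'
        · exact absurd h' h12ne
        · rcases mul_eq_zero.mp h' with h'' | h''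
          · exact absurd h'' hc2ne
          · exact absurd h'' hc1ne
    have hu1S : u1 ∈ S := hu1
    have hcount1 : (S \ {u1}).ncard = F.ncard := by
      rw [← himg, Set.ncard_image_of_injOn hinjOn]
    have hFcard : F.ncard = p ^ m := by
      apply ncard_fix_pow K p (s * 2) m hp
      · rw [hK, pow_mul]
      · exact Nat.gcd_pos_of_pos_left s hi0
      · exact dvd_mul_of_dvd_left (Nat.gcd_dvd_right i s) 2
    have hstep := Set.ncard_diff_singleton_add_one hu1S
    rw [← hstep, hcount1, hFcard]

theorem stmt1 (p s : ℕ) (hp : p.Prime) (hs : 1 < s) (q : ℕ) (hq : q = p ^ s)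
    (i m : ℕ) (hi0 : 0 < i) (his : i < s) (hm : m = Nat.gcd i s)
    (K : Type) [Field K] [Fintype K] (hK : Fintype.card K = q ^ 2)
    (a b : K) (hab : (a, b) ≠ (0, 0)) :
    ({u : K | u ^ (q + 1) = 1 ∧
        a + b * u + b ^ q * u ^ (p ^ i) + a ^ q * u ^ (p ^ i + 1) = 0}).ncard
      ∈ ({0, 1, 2, p ^ m + 1} : Set ℕ) := by
  subst hq hm
  have hab' : ¬(a = 0 ∧ b = 0) := by
    rintro ⟨rfl, rfl⟩
    exact hab rfl
  set S : Set K := {u : K | u ^ (p ^ s + 1) = 1 ∧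
      a + b * u + b ^ (p ^ s) * u ^ (p ^ i) + a ^ (p ^ s) * u ^ (p ^ i + 1) = 0} with hSdef
  simp only [Set.mem_insert_iff, Set.mem_singleton_iff]
  by_cases h2 : S.ncard ≤ 2
  · interval_cases h : S.ncard <;> simp
  · push_neg at h2
    have hne : S.Nonempty := Set.nonempty_of_ncard_ne_zero (by omega)
    obtain ⟨u1, hu1⟩ := hne
    have h1lt : ({u1} : Set K).ncard < S.ncard := by rw [Set.ncard_singleton]; omega
    obtain ⟨u2, hu2, hu2n⟩ := Set.exists_mem_notMem_of_ncard_lt_ncard h1lt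
    have h2lt : ({u1, u2} : Set K).ncard < S.ncard := by
      have hle : ({u1, u2} : Set K).ncard ≤ 2 := by
        have := Set.ncard_insert_le u1 ({u2} : Set K)
        simpa [Set.ncard_singleton] using this
      omega
    obtain ⟨u3, hu3, hu3n⟩ := Set.exists_mem_notMem_of_ncard_lt_ncard h2lt
    simp only [Set.mem_singleton_iff] at hu2n
    simp only [Set.mem_insert_iff, Set.mem_singleton_iff, not_or] at hu3n
    have hcount := main_count p s i hp hi0 (by omega) K hK a b hab' u1 u2 u3
      (Ne.symm hu2n) (Ne.symm hu3n.1) (Ne.symm hu3n.2) hu1 hu2 hu3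
    right; right; right
    exact hcount
end

section
/- Let p be an odd prime, s > 1 an integer, q = p^s, and let i be an integer with 0 < i < s and m = gcd(i, s). For every pair (a, b) ∈ F_{q^2} × F_{q^2} with (a, b) ≠ (0, 0), the number of u ∈ U_{q+1} satisfying b^q + a^q·u + a·u^{p^i} + b·u^{p^i + 1} = 0 belongs to the set {0, 1, 2, p^m + 1}. -/
namespace Stmt4Aux

open Projectivization
open scoped LinearAlgebra.Projectivization

variable {K : Type} [Field K]

lemma pair_zero {u v : K} : (u, v) = (0 : K × K) ↔ u = 0 ∧ v = 0 := by
  constructor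
  · intro h
    exact ⟨congrArg Prod.fst h, congrArg Prod.snd h⟩
  · rintro ⟨rfl, rfl⟩
    rfl

lemma vec_ne {A B C D u v : K} (hdet : A * D - B * C ≠ 0) (huv : (u, v) ≠ (0 : K × K)) :
    ((A * u + B * v, C * u + D * v) : K × K) ≠ 0 := by
  intro h
  rw [pair_zero] at h
  obtain ⟨h1, h2⟩ := h
  apply huv
  rw [pair_zero]
  have hu0 : (A * D - B * C) * u = 0 := by
    have hu : (A * D - B * C) * u = D * (A * u + B * v) - B * (C * u + D * v) := by ring
    rw [h1, h2] at hu; simpa using hu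
  have hv0 : (A * D - B * C) * v = 0 := by
    have hv : (A * D - B * C) * v = A * (C * u + D * v) - C * (A * u + B * v) := by ring
    rw [h1, h2] at hv; simpa using hv
  constructor
  · rcases mul_eq_zero.mp hu0 with h0 | h0
    · exact absurd h0 hdet
    · exact h0
  · rcases mul_eq_zero.mp hv0 with h0 | h0
    · exact absurd h0 hdet
    · exact h0

lemma rho_vec_ne (ρ : K →+* K) {u v : K} (huv : (u, v) ≠ (0 : K × K)) :
    ((ρ u, ρ v) : K × K) ≠ 0 := by
  intro h
  rw [pair_zero] at h
  apply huv
  rw [pair_zero]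
  exact ⟨ρ.injective (by simpa using h.1), ρ.injective (by simpa using h.2)⟩

/-- A point of the projective line. -/
noncomputable def pt (u v : K) (h : (u, v) ≠ (0 : K × K)) : ℙ K (K × K) :=
  Projectivization.mk K (u, v) h

lemma pt_eq_pt_iff {u v u' v' : K} (h : (u, v) ≠ (0 : K × K)) (h' : (u', v') ≠ (0 : K × K)) :
    pt u v h = pt u' v' h' ↔ u * v' = u' * v := by
  rw [pt, pt, mk_eq_mk_iff' K (u, v) (u', v') h h']
  constructor
  · rintro ⟨c, hc⟩
    have h1 : c * u' = u := congrArg Prod.fst hc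
    have h2 : c * v' = v := congrArg Prod.snd hc
    rw [← h1, ← h2]; ring
  · intro hx
    by_cases hv' : v' = 0
    · have hu' : u' ≠ 0 := fun hu0 => h' (pair_zero.mpr ⟨hu0, hv'⟩)
      have hv : v = 0 := by
        have hx2 : u' * v = 0 := by rw [← hx, hv', mul_zero]
        rcases mul_eq_zero.mp hx2 with h0 | h0
        · exact absurd h0 hu'
        · exact h0
      refine ⟨u / u', ?_⟩
      have hsmul : (u / u') • ((u', v') : K × K) = ((u / u') * u', (u / u') * v') := rfl
      rw [hsmul, hv', hv, mul_zero, Prod.mk.injEq]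
      exact ⟨by field_simp, rfl⟩
    · refine ⟨v / v', ?_⟩
      have hsmul : (v / v') • ((u', v') : K × K) = ((v / v') * u', (v / v') * v') := rfl
      rw [hsmul, Prod.mk.injEq]
      constructor
      · field_simp
        linear_combination -hx
      · field_simp

lemma exists_pt (x : ℙ K (K × K)) : ∃ (u v : K) (h : (u, v) ≠ (0 : K × K)), x = pt u v h := by
  refine ⟨x.rep.1, x.rep.2, by simpa using x.rep_nonzero, ?_⟩
  rw [pt]
  exact (x.mk_rep).symm

/-- Semilinear "Möbius" action on the projective line. -/
noncomputable def act (ρ : K →+* K) (A B C D : K) (hdet : A * D - B * C ≠ 0)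
    (x : ℙ K (K × K)) : ℙ K (K × K) :=
  pt (A * ρ x.rep.1 + B * ρ x.rep.2) (C * ρ x.rep.1 + D * ρ x.rep.2)
    (vec_ne hdet (rho_vec_ne ρ (by simpa using x.rep_nonzero)))

lemma pt_vec_ne (ρ : K →+* K) {A B C D : K} (hdet : A * D - B * C ≠ 0) {u v : K}
    (h : (u, v) ≠ (0 : K × K)) :
    ((A * ρ u + B * ρ v, C * ρ u + D * ρ v) : K × K) ≠ 0 :=
  vec_ne hdet (rho_vec_ne ρ h)

lemma act_pt (ρ : K →+* K) {A B C D : K} (hdet : A * D - B * C ≠ 0) {u v : K}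
    (h : (u, v) ≠ (0 : K × K))
    (h2 : ((A * ρ u + B * ρ v, C * ρ u + D * ρ v) : K × K) ≠ 0) :
    act ρ A B C D hdet (pt u v h) = pt (A * ρ u + B * ρ v) (C * ρ u + D * ρ v) h2 := by
  rw [act]
  set x := pt u v h with hx
  have hrep : Projectivization.mk K x.rep x.rep_nonzero = Projectivization.mk K (u, v) h := by
    rw [x.mk_rep]; exact hx
  rw [mk_eq_mk_iff] at hrep
  obtain ⟨c, hc⟩ := hrep
  have hc1 : (c : K) * u = x.rep.1 := congrArg Prod.fst hc
  have hc2 : (c : K) * v = x.rep.2 := congrArg Prod.snd hc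
  rw [pt_eq_pt_iff, ← hc1, ← hc2, map_mul, map_mul]
  ring

lemma det_comp (ρ' : K →+* K) (A' B' C' D' A B C D : K) :
    (A' * ρ' A + B' * ρ' C) * (C' * ρ' B + D' * ρ' D)
      - (A' * ρ' B + B' * ρ' D) * (C' * ρ' A + D' * ρ' C)
    = (A' * D' - B' * C') * ρ' (A * D - B * C) := by
  rw [map_sub, map_mul, map_mul]
  ring

lemma det_comp_ne {ρ' : K →+* K} {A' B' C' D' A B C D : K}
    (h1 : A' * D' - B' * C' ≠ 0) (h2 : A * D - B * C ≠ 0) :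
    (A' * ρ' A + B' * ρ' C) * (C' * ρ' B + D' * ρ' D)
      - (A' * ρ' B + B' * ρ' D) * (C' * ρ' A + D' * ρ' C) ≠ 0 := by
  rw [det_comp]
  exact mul_ne_zero h1 (fun hc => h2 (ρ'.injective (by simpa using hc)))

lemma act_act (ρ' ρ : K →+* K) {A' B' C' D' A B C D : K}
    (hdet' : A' * D' - B' * C' ≠ 0) (hdet : A * D - B * C ≠ 0) (x : ℙ K (K × K)) :
    act ρ' A' B' C' D' hdet' (act ρ A B C D hdet x)
      = act (ρ'.comp ρ) (A' * ρ' A + B' * ρ' C) (A' * ρ' B + B' * ρ' D)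
          (C' * ρ' A + D' * ρ' C) (C' * ρ' B + D' * ρ' D) (det_comp_ne hdet' hdet) x := by
  obtain ⟨u, v, h, rfl⟩ := exists_pt x
  rw [act_pt ρ hdet h (pt_vec_ne ρ hdet h),
    act_pt ρ' hdet' (pt_vec_ne ρ hdet h) (pt_vec_ne ρ' hdet' (pt_vec_ne ρ hdet h)),
    act_pt (ρ'.comp ρ) (det_comp_ne hdet' hdet) h
      (pt_vec_ne (ρ'.comp ρ) (det_comp_ne hdet' hdet) h),
    pt_eq_pt_iff]
  simp only [map_add, map_mul, RingHom.coe_comp, Function.comp_apply]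
  ring

lemma act_congr {ρ : K →+* K} {A B C D A' B' C' D' : K}
    (hdet : A * D - B * C ≠ 0) (hdet' : A' * D' - B' * C' ≠ 0)
    (hA : A = A') (hB : B = B') (hC : C = C') (hD : D = D') (x : ℙ K (K × K)) :
    act ρ A B C D hdet x = act ρ A' B' C' D' hdet' x := by
  subst hA; subst hB; subst hC; subst hD; rfl

lemma act_scalar {k : K} (hk : k * k - 0 * 0 ≠ 0) (x : ℙ K (K × K)) :
    act (RingHom.id K) k 0 0 k hk x = x := by
  obtain ⟨u, v, h, rfl⟩ := exists_pt x
  rw [act_pt (RingHom.id K) hk h (pt_vec_ne (RingHom.id K) hk h), pt_eq_pt_iff]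
  simp only [RingHom.id_apply]
  ring

lemma act_injective (ρ : K →+* K) {A B C D : K} (hdet : A * D - B * C ≠ 0) :
    Function.Injective (act ρ A B C D hdet) := by
  intro x y hxy
  obtain ⟨u, v, h, rfl⟩ := exists_pt x
  obtain ⟨u', v', h', rfl⟩ := exists_pt y
  rw [act_pt ρ hdet h (pt_vec_ne ρ hdet h), act_pt ρ hdet h' (pt_vec_ne ρ hdet h'),
    pt_eq_pt_iff] at hxy
  rw [pt_eq_pt_iff]
  have key : (A * D - B * C) * (ρ u * ρ v' - ρ u' * ρ v) = 0 := by
    linear_combination hxy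
  rcases mul_eq_zero.mp key with h0 | h0
  · exact absurd h0 hdet
  · have hz : ρ (u * v' - u' * v) = ρ 0 := by
      rw [map_sub, map_mul, map_mul, map_zero]; linear_combination h0
    have := ρ.injective hz
    exact sub_eq_zero.mp this

lemma finiteP [Finite K] : Finite (ℙ K (K × K)) :=
  Quotient.finite _

lemma act_surjective [Finite K] (ρ : K →+* K) {A B C D : K} (hdet : A * D - B * C ≠ 0) :
    Function.Surjective (act ρ A B C D hdet) := by
  have : Finite (ℙ K (K × K)) := finiteP
  exact Finite.surjective_of_injective (act_injective ρ hdet)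

lemma pair10_ne : ((1 : K), (0 : K)) ≠ (0 : K × K) := by
  intro h; exact one_ne_zero (pair_zero.mp h).1

lemma pairc1_ne (c : K) : ((c, (1 : K)) : K × K) ≠ 0 := by
  intro h; exact one_ne_zero (pair_zero.mp h).2

lemma det_one : (1 : K) * 1 - 0 * 0 ≠ 0 := by norm_num

section Frob

variable (p : ℕ) [ExpChar K p]

/-- The Frobenius-type semilinear automorphism of the projective line. -/
noncomputable def Φ (t : ℕ) : ℙ K (K × K) → ℙ K (K × K) :=
  act (iterateFrobenius K p t) 1 0 0 1 det_one

lemma Φ_pt (t : ℕ) {u v : K} (h : (u, v) ≠ (0 : K × K))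
    (h2 : ((u ^ p ^ t, v ^ p ^ t) : K × K) ≠ 0) :
    Φ p t (pt u v h) = pt (u ^ p ^ t) (v ^ p ^ t) h2 := by
  rw [Φ, act_pt (iterateFrobenius K p t) det_one h (by
    simpa [iterateFrobenius_def] using h2)]
  apply pt_eq_pt_iff _ _ |>.mpr
  simp only [iterateFrobenius_def, one_mul, zero_mul, mul_zero, add_zero, zero_add]

lemma pow_pair_ne (t : ℕ) {u v : K} (h : (u, v) ≠ (0 : K × K)) :
    ((u ^ p ^ t, v ^ p ^ t) : K × K) ≠ 0 := by
  intro hc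
  rw [pair_zero] at hc
  apply h
  rw [pair_zero]
  have hpt : (p : ℕ) ^ t ≠ 0 := (expChar_pow_pos K p t).ne'
  exact ⟨pow_eq_zero_iff hpt |>.mp hc.1, pow_eq_zero_iff hpt |>.mp hc.2⟩

lemma Φ_fix_of_reps (t : ℕ) {u v : K} (h : (u, v) ≠ (0 : K × K))
    (hu : u ^ p ^ t = u) (hv : v ^ p ^ t = v) : Φ p t (pt u v h) = pt u v h := by
  rw [Φ_pt p t h (by rw [hu, hv]; exact h)]
  rw [pt_eq_pt_iff, hu, hv]

lemma Φ_fix_reps (t : ℕ) {x : ℙ K (K × K)} (hx : Φ p t x = x) :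
    ∃ (u v : K) (h : (u, v) ≠ (0 : K × K)),
      x = pt u v h ∧ u ^ p ^ t = u ∧ v ^ p ^ t = v := by
  obtain ⟨u₀, v₀, h₀, rfl⟩ := exists_pt x
  have hpt := hx
  rw [Φ_pt p t h₀ (pow_pair_ne p t h₀), pt_eq_pt_iff] at hpt
  by_cases hv₀ : v₀ = 0
  · refine ⟨1, 0, pair10_ne, ?_, one_pow _, ?_⟩
    · rw [pt_eq_pt_iff]
      rw [hv₀]; ring
    · rw [zero_pow]
      exact (expChar_pow_pos K p t).ne'
  · refine ⟨u₀ / v₀, 1, pairc1_ne _, ?_, ?_, one_pow _⟩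
    · rw [pt_eq_pt_iff]
      field_simp
    · rw [div_pow]
      rw [div_eq_div_iff (pow_ne_zero _ hv₀) hv₀]
      linear_combination hpt

end Frob

lemma card_pow_eq_one [Fintype K] (d : ℕ) (hd0 : 0 < d) (hd : d ∣ Fintype.card K - 1) :
    ({x : K | x ^ d = 1}).ncard = d := by
  classical
  obtain ⟨g, hg⟩ := IsCyclic.exists_generator (α := Kˣ)
  have hord : orderOf g = Fintype.card Kˣ := by
    rw [orderOf_eq_card_of_forall_mem_zpowers hg, Nat.card_eq_fintype_card]
  have hNd : d ∣ Fintype.card Kˣ := by rwa [Fintype.card_units]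
  have hN0 : Fintype.card Kˣ ≠ 0 := Fintype.card_ne_zero
  set N := Fintype.card Kˣ with hN
  have hordζ : orderOf (g ^ (N / d)) = d := by
    rw [orderOf_pow, hord, Nat.gcd_eq_right (Nat.div_dvd_of_dvd hNd), Nat.div_div_self hNd hN0]
  have hprim : IsPrimitiveRoot (g ^ (N / d)) d := by
    have := IsPrimitiveRoot.orderOf (g ^ (N / d))
    rwa [hordζ] at this
  have hprimK : IsPrimitiveRoot ((g ^ (N / d) : Kˣ) : K) d :=
    IsPrimitiveRoot.coe_units_iff.mpr hprim
  have hset : {x : K | x ^ d = 1} = ↑(Polynomial.nthRootsFinset d (1 : K)) := by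
    ext x
    simp [Polynomial.mem_nthRootsFinset hd0 (1 : K)]
  rw [hset, Set.ncard_coe_finset, hprimK.card_nthRootsFinset]

lemma card_fix_field [Fintype K] {p t n : ℕ} (hp : 1 < p) (ht : 0 < t) (htn : t ∣ n)
    (hcard : Fintype.card K = p ^ n) :
    ({c : K | c ^ p ^ t = c}).ncard = p ^ t := by
  have hpt1 : 1 < p ^ t := one_lt_pow₀ hp ht.ne'
  have hset : {c : K | c ^ p ^ t = c} = insert (0 : K) {x : K | x ^ (p ^ t - 1) = 1} := by
    ext c
    simp only [Set.mem_setOf_eq, Set.mem_insert_iff]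
    constructor
    · intro hc
      by_cases hc0 : c = 0
      · exact Or.inl hc0
      · right
        have : c ^ (p ^ t - 1) * c = c := by
          rw [← pow_succ, Nat.sub_add_cancel hpt1.le]; exact hc
        field_simp at this
        exact this
    · rintro (rfl | hc)
      · rw [zero_pow (by positivity)]
      · calc c ^ p ^ t = c ^ (p ^ t - 1) * c := by
              rw [← pow_succ, Nat.sub_add_cancel hpt1.le]
          _ = c := by rw [hc, one_mul]
  have hnotmem : (0 : K) ∉ {x : K | x ^ (p ^ t - 1) = 1} := by
    simp only [Set.mem_setOf_eq]
    rw [zero_pow (by omega)]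
    exact zero_ne_one
  have hdvd : p ^ t - 1 ∣ Fintype.card K - 1 := by
    obtain ⟨k, rfl⟩ := htn
    rw [hcard, pow_mul]
    simpa using Nat.sub_dvd_pow_sub_pow (p ^ t) 1 k
  rw [hset, Set.ncard_insert_of_notMem hnotmem (Set.toFinite _),
    card_pow_eq_one _ (by omega) hdvd]
  omega

lemma nat_bezout (i n : ℕ) (hi : 0 < i) : ∃ α β : ℕ, 0 < α ∧ α * i = Nat.gcd i n + β * n := by
  rcases Nat.eq_zero_or_pos n with rfl | hn
  · exact ⟨1, 0, one_pos, by simp [Nat.gcd_zero_right]⟩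
  · have hbez := Nat.gcd_eq_gcd_ab i n
    set A := Nat.gcdA i n
    set B := Nat.gcdB i n
    set M : ℤ := A.natAbs + B.natAbs + 1
    have hM : 0 < M := by positivity
    have hα : 0 < A + M * n := by
      have h1 : (A.natAbs : ℤ) + 1 ≤ M := by simp only [M]; omega
      have h2 : M ≤ M * n := le_mul_of_one_le_right hM.le (by exact_mod_cast hn)
      have := neg_abs_le A
      simp only [Int.abs_eq_natAbs] at this
      omega
    have hβ : 0 ≤ M * i - B := by
      have h1 : (B.natAbs : ℤ) + 1 ≤ M := by simp only [M]; omega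
      have h2 : M ≤ M * i := le_mul_of_one_le_right hM.le (by exact_mod_cast hi)
      have := le_abs_self B
      simp only [Int.abs_eq_natAbs] at this
      omega
    refine ⟨(A + M * n).toNat, (M * i - B).toNat, by omega, ?_⟩
    have key : ((A + M * n).toNat : ℤ) * i = Nat.gcd i n + ((M * i - B).toNat : ℤ) * n := by
      rw [Int.toNat_of_nonneg hα.le, Int.toNat_of_nonneg hβ]
      rw [hbez]; ring
    exact_mod_cast key

lemma pow_fix_mul {p : ℕ} {c : K} (t k : ℕ) (h : c ^ p ^ t = c) : c ^ p ^ (t * k) = c := by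
  induction k with
  | zero => simp
  | succ k ih =>
    have : p ^ (t * (k + 1)) = p ^ (t * k) * p ^ t := by rw [← pow_add]; ring_nf
    rw [this, pow_mul, ih, h]

lemma pow_fix_dvd {p : ℕ} {c : K} {t t' : ℕ} (h : t ∣ t') (hc : c ^ p ^ t = c) :
    c ^ p ^ t' = c := by
  obtain ⟨k, rfl⟩ := h
  exact pow_fix_mul t k hc

lemma pow_fix_mod {p : ℕ} {c : K} {e s : ℕ} (he : 0 < e) (hc : c ^ p ^ e = c) :
    c ^ p ^ s = c ^ p ^ (s % e) := by
  conv_lhs => rw [← Nat.div_add_mod s e]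
  rw [pow_add, pow_mul]
  congr 1
  exact pow_fix_mul e (s / e) hc

lemma pow_fix_gcd {p n : ℕ} (hall : ∀ x : K, x ^ p ^ n = x) {c : K} {i : ℕ} (hi : 0 < i)
    (hc : c ^ p ^ i = c) : c ^ p ^ Nat.gcd i n = c := by
  obtain ⟨α, β, hα, hαβ⟩ := nat_bezout i n hi
  have h1 : c ^ p ^ (i * α) = c := pow_fix_mul i α hc
  have h2 : c ^ p ^ (i * α) = c ^ p ^ Nat.gcd i n := by
    rw [mul_comm i α, hαβ, pow_add, mul_comm (p ^ Nat.gcd i n), pow_mul, mul_comm β n]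
    congr 1
    exact pow_fix_mul n β (hall c)
  rw [← h2, h1]

lemma fix_set_eq (p : ℕ) [ExpChar K p] (t : ℕ) :
    {x : ℙ K (K × K) | Φ p t x = x}
      = insert (pt 1 0 pair10_ne) ((fun c : K => pt c 1 (pairc1_ne c)) '' {c : K | c ^ p ^ t = c}) := by
  ext x
  simp only [Set.mem_setOf_eq, Set.mem_insert_iff, Set.mem_image]
  constructor
  · intro hx
    obtain ⟨u, v, h, rfl, hu, hv⟩ := Φ_fix_reps p t hx
    by_cases hv0 : v = 0
    · left
      rw [pt_eq_pt_iff]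
      rw [hv0]; ring
    · right
      refine ⟨u / v, ?_, ?_⟩
      · simp only [Set.mem_setOf_eq, div_pow, hu, hv]
      · rw [pt_eq_pt_iff]
        field_simp
  · rintro (rfl | ⟨c, hc, rfl⟩)
    · exact Φ_fix_of_reps p t pair10_ne (one_pow _) (by
        rw [zero_pow (expChar_pow_pos K p t).ne'])
    · exact Φ_fix_of_reps p t (pairc1_ne c) hc (one_pow _)

lemma card_fix_set [Fintype K] (p : ℕ) [ExpChar K p] {t n : ℕ} (hp : 1 < p) (ht : 0 < t)
    (htn : t ∣ n) (hcard : Fintype.card K = p ^ n) :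
    ({x : ℙ K (K × K) | Φ p t x = x}).ncard = p ^ t + 1 := by
  rw [fix_set_eq]
  have hinj : Set.InjOn (fun c : K => pt c 1 (pairc1_ne c)) {c : K | c ^ p ^ t = c} := by
    intro c₁ _ c₂ _ hc
    have := (pt_eq_pt_iff (pairc1_ne c₁) (pairc1_ne c₂)).mp hc
    simpa using this
  have hnotmem : pt 1 0 pair10_ne ∉ (fun c : K => pt c 1 (pairc1_ne c)) '' {c : K | c ^ p ^ t = c} := by
    rintro ⟨c, _, hc⟩
    have := (pt_eq_pt_iff (pairc1_ne c) pair10_ne).mp hc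
    simpa using this
  have : Finite K := Finite.of_fintype K
  have : Finite (ℙ K (K × K)) := finiteP
  rw [Set.ncard_insert_of_notMem hnotmem (Set.toFinite _), Set.ncard_image_of_injOn hinj,
    card_fix_field hp ht htn hcard]

lemma pair01_ne : ((0 : K), (1 : K)) ≠ (0 : K × K) := by
  intro h; exact one_ne_zero (pair_zero.mp h).2

lemma pair11_ne : ((1 : K), (1 : K)) ≠ (0 : K × K) := by
  intro h; exact one_ne_zero (pair_zero.mp h).1

lemma actρ_pt (ρ : K →+* K) {u v : K} (h : (u, v) ≠ (0 : K × K))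
    (h2 : ((ρ u, ρ v) : K × K) ≠ 0) :
    act ρ 1 0 0 1 det_one (pt u v h) = pt (ρ u) (ρ v) h2 := by
  rw [act_pt ρ det_one h (by simpa using rho_vec_ne ρ h)]
  rw [pt_eq_pt_iff]
  ring

lemma fixρ_of_reps (ρ : K →+* K) {u v : K} (h : (u, v) ≠ (0 : K × K))
    (hu : ρ u = u) (hv : ρ v = v) : act ρ 1 0 0 1 det_one (pt u v h) = pt u v h := by
  rw [actρ_pt ρ h (by rw [hu, hv]; exact h), pt_eq_pt_iff, hu, hv]

lemma fixρ_reps (ρ : K →+* K) {x : ℙ K (K × K)} (hx : act ρ 1 0 0 1 det_one x = x) :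
    ∃ (u v : K) (h : (u, v) ≠ (0 : K × K)), x = pt u v h ∧ ρ u = u ∧ ρ v = v := by
  obtain ⟨u₀, v₀, h₀, rfl⟩ := exists_pt x
  have hpt := hx
  rw [actρ_pt ρ h₀ (rho_vec_ne ρ h₀), pt_eq_pt_iff] at hpt
  by_cases hv₀ : v₀ = 0
  · refine ⟨1, 0, pair10_ne, ?_, map_one ρ, map_zero ρ⟩
    rw [pt_eq_pt_iff, hv₀]; ring
  · refine ⟨u₀ / v₀, 1, pairc1_ne _, ?_, ?_, map_one ρ⟩
    · rw [pt_eq_pt_iff]; field_simp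
    · rw [map_div₀]
      have hρv : ρ v₀ ≠ 0 := fun hc => hv₀ (by simpa using ρ.injective (by simpa using hc))
      rw [div_eq_div_iff hρv hv₀]
      linear_combination hpt

lemma triple_transitive (ρ : K →+* K) {x₁ x₂ x₃ : ℙ K (K × K)}
    (hx₁ : act ρ 1 0 0 1 det_one x₁ = x₁) (hx₂ : act ρ 1 0 0 1 det_one x₂ = x₂)
    (hx₃ : act ρ 1 0 0 1 det_one x₃ = x₃)
    (h12 : x₁ ≠ x₂) (h13 : x₁ ≠ x₃) (h23 : x₂ ≠ x₃) :
    ∃ (α β γ δ : K) (hdet : α * δ - β * γ ≠ 0),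
      ρ α = α ∧ ρ β = β ∧ ρ γ = γ ∧ ρ δ = δ ∧
      act (RingHom.id K) α β γ δ hdet (pt 1 0 pair10_ne) = x₁ ∧
      act (RingHom.id K) α β γ δ hdet (pt 0 1 pair01_ne) = x₂ ∧
      act (RingHom.id K) α β γ δ hdet (pt 1 1 pair11_ne) = x₃ := by
  obtain ⟨u₁, v₁, h₁, rfl, hu₁, hv₁⟩ := fixρ_reps ρ hx₁
  obtain ⟨u₂, v₂, h₂, rfl, hu₂, hv₂⟩ := fixρ_reps ρ hx₂
  obtain ⟨u₃, v₃, h₃, rfl, hu₃, hv₃⟩ := fixρ_reps ρ hx₃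
  have hδ12 : u₁ * v₂ - u₂ * v₁ ≠ 0 := by
    intro hc; exact h12 ((pt_eq_pt_iff h₁ h₂).mpr (by linear_combination hc))
  have hn3 : u₃ * v₂ - u₂ * v₃ ≠ 0 := by
    intro hc; exact h23 (((pt_eq_pt_iff h₂ h₃).mpr (by linear_combination -hc)))
  have hn1 : u₁ * v₃ - u₃ * v₁ ≠ 0 := by
    intro hc; exact h13 ((pt_eq_pt_iff h₁ h₃).mpr (by linear_combination hc))
  set lam : K := (u₃ * v₂ - u₂ * v₃) / (u₁ * v₂ - u₂ * v₁) with hlam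
  set mu : K := (u₁ * v₃ - u₃ * v₁) / (u₁ * v₂ - u₂ * v₁) with hmu
  have hlam0 : lam ≠ 0 := div_ne_zero hn3 hδ12
  have hmu0 : mu ≠ 0 := div_ne_zero hn1 hδ12
  have hdet : (lam * u₁) * (mu * v₂) - (mu * u₂) * (lam * v₁) ≠ 0 := by
    have : (lam * u₁) * (mu * v₂) - (mu * u₂) * (lam * v₁) = lam * mu * (u₁ * v₂ - u₂ * v₁) := by
      ring
    rw [this]
    exact mul_ne_zero (mul_ne_zero hlam0 hmu0) hδ12
  have hρδ12 : ρ (u₁ * v₂ - u₂ * v₁) = u₁ * v₂ - u₂ * v₁ := by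
    rw [map_sub, map_mul, map_mul, hu₁, hv₂, hu₂, hv₁]
  have hρlam : ρ lam = lam := by
    rw [hlam, map_div₀, hρδ12, map_sub, map_mul, map_mul, hu₃, hv₂, hu₂, hv₃]
  have hρmu : ρ mu = mu := by
    rw [hmu, map_div₀, hρδ12, map_sub, map_mul, map_mul, hu₁, hv₃, hu₃, hv₁]
  refine ⟨lam * u₁, mu * u₂, lam * v₁, mu * v₂, hdet, ?_, ?_, ?_, ?_, ?_, ?_, ?_⟩
  · rw [map_mul, hρlam, hu₁]
  · rw [map_mul, hρmu, hu₂]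
  · rw [map_mul, hρlam, hv₁]
  · rw [map_mul, hρmu, hv₂]
  · rw [act_pt (RingHom.id K) hdet pair10_ne (pt_vec_ne (RingHom.id K) hdet pair10_ne),
      pt_eq_pt_iff]
    simp only [RingHom.id_apply]
    ring
  · rw [act_pt (RingHom.id K) hdet pair01_ne (pt_vec_ne (RingHom.id K) hdet pair01_ne),
      pt_eq_pt_iff]
    simp only [RingHom.id_apply]
    ring
  · rw [act_pt (RingHom.id K) hdet pair11_ne (pt_vec_ne (RingHom.id K) hdet pair11_ne),
      pt_eq_pt_iff]
    simp only [RingHom.id_apply]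
    field_simp
    ring

lemma pair_ne_of_det₁ {α β γ δ : K} (hdet : α * δ - β * γ ≠ 0) : ((α, γ) : K × K) ≠ 0 := by
  intro hc
  rw [pair_zero] at hc
  exact hdet (by rw [hc.1, hc.2]; ring)

lemma pair_ne_of_det₂ {α β γ δ : K} (hdet : α * δ - β * γ ≠ 0) : ((β, δ) : K × K) ≠ 0 := by
  intro hc
  rw [pair_zero] at hc
  exact hdet (by rw [hc.1, hc.2]; ring)

lemma pair_ne_of_det₃ {α β γ δ : K} (hdet : α * δ - β * γ ≠ 0) :
    ((α + β, γ + δ) : K × K) ≠ 0 := by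
  intro hc
  rw [pair_zero] at hc
  have hβ : β = -α := by linear_combination hc.1
  have hδ : δ = -γ := by linear_combination hc.2
  apply hdet
  rw [hβ, hδ]; ring

lemma psi_pt10 {α β γ δ : K} (hdetψ : α * δ - β * γ ≠ 0) :
    act (RingHom.id K) α β γ δ hdetψ (pt 1 0 pair10_ne) = pt α γ (pair_ne_of_det₁ hdetψ) := by
  rw [act_pt (RingHom.id K) hdetψ pair10_ne (pt_vec_ne (RingHom.id K) hdetψ pair10_ne),
    pt_eq_pt_iff]
  simp only [RingHom.id_apply]
  ring

lemma psi_pt01 {α β γ δ : K} (hdetψ : α * δ - β * γ ≠ 0) :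
    act (RingHom.id K) α β γ δ hdetψ (pt 0 1 pair01_ne) = pt β δ (pair_ne_of_det₂ hdetψ) := by
  rw [act_pt (RingHom.id K) hdetψ pair01_ne (pt_vec_ne (RingHom.id K) hdetψ pair01_ne),
    pt_eq_pt_iff]
  simp only [RingHom.id_apply]
  ring

lemma psi_pt11 {α β γ δ : K} (hdetψ : α * δ - β * γ ≠ 0) :
    act (RingHom.id K) α β γ δ hdetψ (pt 1 1 pair11_ne) = pt (α + β) (γ + δ)
      (pair_ne_of_det₃ hdetψ) := by
  rw [act_pt (RingHom.id K) hdetψ pair11_ne (pt_vec_ne (RingHom.id K) hdetψ pair11_ne),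
    pt_eq_pt_iff]
  simp only [RingHom.id_apply]
  ring

lemma psi_pt {α β γ δ : K} (hdetψ : α * δ - β * γ ≠ 0) {u v : K} (h : (u, v) ≠ (0 : K × K)) :
    act (RingHom.id K) α β γ δ hdetψ (pt u v h)
      = pt (α * u + β * v) (γ * u + δ * v) (vec_ne hdetψ h) := by
  rw [act_pt (RingHom.id K) hdetψ h (pt_vec_ne (RingHom.id K) hdetψ h), pt_eq_pt_iff]
  simp only [RingHom.id_apply]

lemma G_pt {A B C D : K} (hdetG : A * D - B * C ≠ 0) {u v : K} (h : (u, v) ≠ (0 : K × K)) :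
    act (RingHom.id K) A B C D hdetG (pt u v h)
      = pt (A * u + B * v) (C * u + D * v) (vec_ne hdetG h) :=
  psi_pt hdetG h

lemma ML3 [Finite K] (ρ : K →+* K) {A B C D α β γ δ : K}
    (hdetG : A * D - B * C ≠ 0) (hdetψ : α * δ - β * γ ≠ 0)
    (hT1 : act ρ 1 0 0 1 det_one (act (RingHom.id K) α β γ δ hdetψ (pt 1 0 pair10_ne))
        = act (RingHom.id K) A B C D hdetG (act (RingHom.id K) α β γ δ hdetψ (pt 1 0 pair10_ne)))
    (hT2 : act ρ 1 0 0 1 det_one (act (RingHom.id K) α β γ δ hdetψ (pt 0 1 pair01_ne))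
        = act (RingHom.id K) A B C D hdetG (act (RingHom.id K) α β γ δ hdetψ (pt 0 1 pair01_ne)))
    (hT3 : act ρ 1 0 0 1 det_one (act (RingHom.id K) α β γ δ hdetψ (pt 1 1 pair11_ne))
        = act (RingHom.id K) A B C D hdetG (act (RingHom.id K) α β γ δ hdetψ (pt 1 1 pair11_ne))) :
    {x : ℙ K (K × K) | act ρ 1 0 0 1 det_one x = act (RingHom.id K) A B C D hdetG x}
      = act (RingHom.id K) α β γ δ hdetψ ''
          {x : ℙ K (K × K) | act ρ 1 0 0 1 det_one x = x} := by
  have hE1 : ρ α * (C * α + D * γ) = (A * α + B * γ) * ρ γ := by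
    rw [psi_pt10 hdetψ] at hT1
    rw [actρ_pt ρ _ (rho_vec_ne ρ (pair_ne_of_det₁ hdetψ)),
      G_pt hdetG _, pt_eq_pt_iff] at hT1
    exact hT1
  have hE2 : ρ β * (C * β + D * δ) = (A * β + B * δ) * ρ δ := by
    rw [psi_pt01 hdetψ] at hT2
    rw [actρ_pt ρ _ (rho_vec_ne ρ (pair_ne_of_det₂ hdetψ)),
      G_pt hdetG _, pt_eq_pt_iff] at hT2
    exact hT2
  have hE3 : (ρ α + ρ β) * (C * (α + β) + D * (γ + δ))
      = (A * (α + β) + B * (γ + δ)) * (ρ γ + ρ δ) := by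
    rw [psi_pt11 hdetψ] at hT3
    rw [actρ_pt ρ _ (rho_vec_ne ρ (pair_ne_of_det₃ hdetψ)),
      G_pt hdetG _, pt_eq_pt_iff, map_add, map_add] at hT3
    exact hT3
  have hQsum : (ρ α * (C * β + D * δ) - (A * β + B * δ) * ρ γ)
      + (ρ β * (C * α + D * γ) - (A * α + B * γ) * ρ δ) = 0 := by
    linear_combination hE3 - hE1 - hE2
  have hρdet : ρ α * ρ δ - ρ β * ρ γ ≠ 0 := by
    intro hc
    apply hdetψ
    have : ρ (α * δ - β * γ) = ρ 0 := by
      rw [map_sub, map_mul, map_mul, map_zero]; linear_combination hc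
    simpa [sub_eq_zero] using ρ.injective this
  have hQ1 : ρ α * (C * β + D * δ) - (A * β + B * δ) * ρ γ ≠ 0 := by
    intro hc
    have hQQ : (ρ α * (C * β + D * δ) - (A * β + B * δ) * ρ γ)
        * (ρ β * (C * α + D * γ) - (A * α + B * γ) * ρ δ)
        = -((ρ α * ρ δ - ρ β * ρ γ) * ((A * D - B * C) * (α * δ - β * γ))) := by
      linear_combination (ρ β * (C * β + D * δ) - (A * β + B * δ) * ρ δ) * hE1
    rw [hc, zero_mul] at hQQ
    exact (mul_ne_zero hρdet (mul_ne_zero hdetG hdetψ)) (by linear_combination hQQ)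
  have key : ∀ (u v : K) (h : (u, v) ≠ (0 : K × K)),
      (act ρ 1 0 0 1 det_one (act (RingHom.id K) α β γ δ hdetψ (pt u v h))
        = act (RingHom.id K) A B C D hdetG (act (RingHom.id K) α β γ δ hdetψ (pt u v h)))
      ↔ act ρ 1 0 0 1 det_one (pt u v h) = pt u v h := by
    intro u v h
    rw [psi_pt hdetψ h, actρ_pt ρ _ (rho_vec_ne ρ (vec_ne hdetψ h)), G_pt hdetG _,
      pt_eq_pt_iff, actρ_pt ρ h (rho_vec_ne ρ h), pt_eq_pt_iff]
    constructor
    · intro hc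
      rw [map_add, map_add, map_mul, map_mul, map_mul, map_mul] at hc
      have hz : (ρ α * (C * β + D * δ) - (A * β + B * δ) * ρ γ) * (ρ u * v - u * ρ v) = 0 := by
        linear_combination hc - (ρ u * u) * hE1 - (ρ v * v) * hE2 - (ρ v * u) * hQsum
      rcases mul_eq_zero.mp hz with h0 | h0
      · exact absurd h0 hQ1
      · linear_combination h0
    · intro hc
      rw [map_add, map_add, map_mul, map_mul, map_mul, map_mul]
      linear_combination (ρ u * u) * hE1 + (ρ v * v) * hE2 + (ρ v * u) * hQsum
        + (ρ α * (C * β + D * δ) - (A * β + B * δ) * ρ γ) * hc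
  ext x
  simp only [Set.mem_setOf_eq, Set.mem_image]
  constructor
  · intro hx
    obtain ⟨y, rfl⟩ := act_surjective (RingHom.id K) hdetψ x
    obtain ⟨u, v, h, rfl⟩ := exists_pt y
    exact ⟨pt u v h, (key u v h).mp hx, rfl⟩
  · rintro ⟨y, hy, rfl⟩
    obtain ⟨u, v, h, rfl⟩ := exists_pt y
    exact (key u v h).mpr hy

lemma pair_swap_ne {u v : K} (h : (u, v) ≠ (0 : K × K)) : ((v, u) : K × K) ≠ 0 := by
  intro hc
  rw [pair_zero] at hc
  exact h (pair_zero.mpr ⟨hc.2, hc.1⟩)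

lemma detJ : (0 : K) * 0 - 1 * 1 ≠ 0 := by norm_num

lemma J_pt (ρ : K →+* K) {u v : K} (h : (u, v) ≠ (0 : K × K))
    (h2 : ((ρ v, ρ u) : K × K) ≠ 0) :
    act ρ 0 1 1 0 detJ (pt u v h) = pt (ρ v) (ρ u) h2 := by
  rw [act_pt ρ detJ h (pt_vec_ne ρ detJ h), pt_eq_pt_iff]
  ring

lemma twisted_structure [Finite K] (ρ ρ2 : K →+* K) {A B C D : K} (hdetG : A * D - B * C ≠ 0)
    (h3 : 2 < ({x : ℙ K (K × K) |
          act ρ 1 0 0 1 det_one x = act (RingHom.id K) A B C D hdetG x}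
        ∩ {x : ℙ K (K × K) | act ρ2 1 0 0 1 det_one x = x}).ncard) :
    ∃ (α β γ δ : K) (hdetψ : α * δ - β * γ ≠ 0),
      ρ2 α = α ∧ ρ2 β = β ∧ ρ2 γ = γ ∧ ρ2 δ = δ ∧
      {x : ℙ K (K × K) | act ρ 1 0 0 1 det_one x = act (RingHom.id K) A B C D hdetG x}
        = act (RingHom.id K) α β γ δ hdetψ ''
            {x : ℙ K (K × K) | act ρ 1 0 0 1 det_one x = x} := by
  have : Finite (ℙ K (K × K)) := finiteP
  obtain ⟨x₁, hx₁, x₂, hx₂, x₃, hx₃, h12, h13, h23⟩ :=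
    (Set.two_lt_ncard (Set.toFinite _)).mp h3
  obtain ⟨α, β, γ, δ, hdetψ, f1, f2, f3, f4, e1, e2, e3⟩ :=
    triple_transitive ρ2 hx₁.2 hx₂.2 hx₃.2 h12 h13 h23
  refine ⟨α, β, γ, δ, hdetψ, f1, f2, f3, f4, ML3 ρ hdetG hdetψ ?_ ?_ ?_⟩
  · rw [e1]; exact hx₁.1
  · rw [e2]; exact hx₂.1
  · rw [e3]; exact hx₃.1

section Count

variable [Fintype K] (p : ℕ) [ExpChar K p]

lemma id_fix_univ :
    {x : ℙ K (K × K) | act (RingHom.id K) 1 0 0 1 det_one x = x} = Set.univ := by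
  ext x
  simp only [Set.mem_setOf_eq, Set.mem_univ, iff_true]
  exact act_scalar det_one x

lemma frob_fix_comb {t : ℕ} {α β u v : K} (hα : α ^ p ^ t = α) (hβ : β ^ p ^ t = β)
    (hu : u ^ p ^ t = u) (hv : v ^ p ^ t = v) :
    (α * u + β * v) ^ p ^ t = α * u + β * v := by
  have : iterateFrobenius K p t (α * u + β * v) = α * u + β * v := by
    rw [map_add, map_mul, map_mul, iterateFrobenius_def, iterateFrobenius_def,
      iterateFrobenius_def, iterateFrobenius_def, hα, hβ, hu, hv]
  rwa [iterateFrobenius_def] at this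

lemma frob_add_pow (t : ℕ) (x y : K) : (x + y) ^ p ^ t = x ^ p ^ t + y ^ p ^ t := by
  have := map_add (iterateFrobenius K p t) x y
  rwa [iterateFrobenius_def, iterateFrobenius_def, iterateFrobenius_def] at this

lemma projective_count {s i m : ℕ} (hp : 1 < p) (hi0 : 0 < i) (hs0 : 0 < s)
    (hm : m = Nat.gcd i s) (hKcard : Fintype.card K = p ^ (2 * s))
    {A B C D : K} (hdetG : A * D - B * C ≠ 0) :
    (({x : ℙ K (K × K) | act (iterateFrobenius K p i) 1 0 0 1 det_one x
          = act (RingHom.id K) A B C D hdetG x}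
        ∩ {x : ℙ K (K × K) | act (iterateFrobenius K p s) 0 1 1 0 detJ x = x}).ncard ≤ 2)
    ∨ (({x : ℙ K (K × K) | act (iterateFrobenius K p i) 1 0 0 1 det_one x
          = act (RingHom.id K) A B C D hdetG x}
        ∩ {x : ℙ K (K × K) | act (iterateFrobenius K p s) 0 1 1 0 detJ x = x}).ncard
        = p ^ m + 1) := by
  have hfinP : Finite (ℙ K (K × K)) := finiteP
  set T : Set (ℙ K (K × K)) :=
    {x | act (iterateFrobenius K p i) 1 0 0 1 det_one x
      = act (RingHom.id K) A B C D hdetG x} with hTdef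
  set Fι : Set (ℙ K (K × K)) :=
    {x | act (iterateFrobenius K p s) 0 1 1 0 detJ x = x} with hFιdef
  by_cases hbig : 2 < T.ncard
  swap
  · left
    calc (T ∩ Fι).ncard ≤ T.ncard := Set.ncard_le_ncard Set.inter_subset_left (Set.toFinite _)
      _ ≤ 2 := by omega
  -- main case
  have hall : ∀ x : K, x ^ p ^ (2 * s) = x := fun x => by
    rw [← hKcard]; exact FiniteField.pow_card x
  set e : ℕ := Nat.gcd i (2 * s) with hedef
  have he0 : 0 < e := Nat.gcd_pos_of_pos_left _ hi0
  have he_i : e ∣ i := Nat.gcd_dvd_left _ _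
  have he_2s : e ∣ 2 * s := Nat.gcd_dvd_right _ _
  have hm_i : m ∣ i := hm ▸ Nat.gcd_dvd_left _ _
  have hm_s : m ∣ s := hm ▸ Nat.gcd_dvd_right _ _
  have hm0 : 0 < m := hm ▸ Nat.gcd_pos_of_pos_left _ hi0
  have hm_e : m ∣ e := Nat.dvd_gcd hm_i (Dvd.dvd.mul_left hm_s 2)
  have he_2m : e ∣ 2 * m := by
    have h1 : e ∣ 2 * i := Dvd.dvd.mul_left he_i 2
    have h2 : e ∣ Nat.gcd (2 * i) (2 * s) := Nat.dvd_gcd h1 he_2s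
    rwa [Nat.gcd_mul_left, ← hm] at h2
  have hfixie : {x : ℙ K (K × K) | act (iterateFrobenius K p i) 1 0 0 1 det_one x = x}
      = {x : ℙ K (K × K) | act (iterateFrobenius K p e) 1 0 0 1 det_one x = x} := by
    ext x
    simp only [Set.mem_setOf_eq]
    constructor
    · intro hx
      obtain ⟨u, v, h, rfl, hu, hv⟩ := fixρ_reps _ hx
      rw [iterateFrobenius_def] at hu hv
      exact fixρ_of_reps _ h (by rw [iterateFrobenius_def]; exact pow_fix_gcd hall hi0 hu)
        (by rw [iterateFrobenius_def]; exact pow_fix_gcd hall hi0 hv)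
    · intro hx
      obtain ⟨u, v, h, rfl, hu, hv⟩ := fixρ_reps _ hx
      rw [iterateFrobenius_def] at hu hv
      exact fixρ_of_reps _ h (by rw [iterateFrobenius_def]; exact pow_fix_dvd he_i hu)
        (by rw [iterateFrobenius_def]; exact pow_fix_dvd he_i hv)
  -- apply twisted_structure with trivial ρ2
  have h3' : 2 < (T ∩ {x : ℙ K (K × K) |
      act (RingHom.id K) 1 0 0 1 det_one x = x}).ncard := by
    rwa [id_fix_univ, Set.inter_univ]
  obtain ⟨α, β, γ, δ, hdetψ, -, -, -, -, hTeq⟩ :=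
    twisted_structure (iterateFrobenius K p i) (RingHom.id K) hdetG h3'
  rw [hfixie] at hTeq
  set ψ := act (RingHom.id K) α β γ δ hdetψ with hψdef
  have hψinj : Function.Injective ψ := act_injective _ _
  have hSim : T ∩ Fι = ψ '' ({x : ℙ K (K × K) |
      act (iterateFrobenius K p e) 1 0 0 1 det_one x = x} ∩ ψ ⁻¹' Fι) := by
    rw [Set.image_inter_preimage, ← hTeq]
  have hScard : (T ∩ Fι).ncard = ({x : ℙ K (K × K) |
      act (iterateFrobenius K p e) 1 0 0 1 det_one x = x} ∩ ψ ⁻¹' Fι).ncard := by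
    rw [hSim, Set.ncard_image_of_injective _ hψinj]
  by_cases hcase : e ∣ s
  · -- Case A : e = m, Frobenius^s is trivial on the fixed field
    have hem : e = m := Nat.dvd_antisymm (hm ▸ Nat.dvd_gcd he_i hcase) hm_e
    set n1 : K := δ * γ ^ p ^ s - β * α ^ p ^ s with hn1
    set n2 : K := δ * δ ^ p ^ s - β * β ^ p ^ s with hn2
    set n3 : K := -(γ * γ ^ p ^ s) + α * α ^ p ^ s with hn3
    set n4 : K := -(γ * δ ^ p ^ s) + α * β ^ p ^ s with hn4
    have hdetfactor : γ ^ p ^ s * β ^ p ^ s - δ ^ p ^ s * α ^ p ^ s ≠ 0 := by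
      intro hc
      apply hdetψ
      have h0 : iterateFrobenius K p s (γ * β - δ * α) = iterateFrobenius K p s 0 := by
        rw [map_zero, map_sub, map_mul, map_mul]
        simp only [iterateFrobenius_def]
        linear_combination hc
      have h1 := (iterateFrobenius K p s).injective h0
      linear_combination -h1
    have hdetN : n1 * n4 - n2 * n3 ≠ 0 := by
      have hid : n1 * n4 - n2 * n3
          = (α * δ - β * γ) * (γ ^ p ^ s * β ^ p ^ s - δ ^ p ^ s * α ^ p ^ s) := by
        rw [hn1, hn2, hn3, hn4]; ring
      rw [hid]
      exact mul_ne_zero hdetψ hdetfactor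
    have hcond : ∀ x ∈ {x : ℙ K (K × K) |
        act (iterateFrobenius K p e) 1 0 0 1 det_one x = x},
        (x ∈ ψ ⁻¹' Fι ↔ act (RingHom.id K) n1 n2 n3 n4 hdetN x = x) := by
      intro x hx
      obtain ⟨u, v, h, rfl, hu, hv⟩ := fixρ_reps _ hx
      rw [iterateFrobenius_def] at hu hv
      have hus : u ^ p ^ s = u := pow_fix_dvd hcase hu
      have hvs : v ^ p ^ s = v := pow_fix_dvd hcase hv
      have hψx : ψ (pt u v h) = pt (α * u + β * v) (γ * u + δ * v) (vec_ne hdetψ h) :=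
        psi_pt hdetψ h
      have hXs : (α * u + β * v) ^ p ^ s = α ^ p ^ s * u + β ^ p ^ s * v := by
        rw [frob_add_pow, mul_pow, mul_pow, hus, hvs]
      have hYs : (γ * u + δ * v) ^ p ^ s = γ ^ p ^ s * u + δ ^ p ^ s * v := by
        rw [frob_add_pow, mul_pow, mul_pow, hus, hvs]
      rw [Set.mem_preimage, hFιdef, Set.mem_setOf_eq, hψx,
        J_pt _ _ (rho_vec_ne _ (pair_swap_ne (vec_ne hdetψ h))), pt_eq_pt_iff,
        G_pt hdetN h, pt_eq_pt_iff]
      simp only [iterateFrobenius_def]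
      rw [hXs, hYs]
      constructor
      · intro hc
        rw [hn1, hn2, hn3, hn4]
        linear_combination hc
      · intro hc
        rw [hn1, hn2, hn3, hn4] at hc
        linear_combination hc
    have hseteq : ({x : ℙ K (K × K) |
          act (iterateFrobenius K p e) 1 0 0 1 det_one x = x} ∩ ψ ⁻¹' Fι)
        = ({x : ℙ K (K × K) | act (iterateFrobenius K p e) 1 0 0 1 det_one x = x}
          ∩ {x : ℙ K (K × K) | act (RingHom.id K) n1 n2 n3 n4 hdetN x = x}) := by
      ext x
      simp only [Set.mem_inter_iff]
      constructor
      · rintro ⟨hx1, hx2⟩; exact ⟨hx1, (hcond x hx1).mp hx2⟩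
      · rintro ⟨hx1, hx2⟩; exact ⟨hx1, (hcond x hx1).mpr hx2⟩
    by_cases hbig2 : 2 < ({x : ℙ K (K × K) |
          act (iterateFrobenius K p e) 1 0 0 1 det_one x = x}
        ∩ {x : ℙ K (K × K) | act (RingHom.id K) n1 n2 n3 n4 hdetN x = x}).ncard
    · right
      have h3'' : 2 < ({x : ℙ K (K × K) | act (RingHom.id K) 1 0 0 1 det_one x
            = act (RingHom.id K) n1 n2 n3 n4 hdetN x}
          ∩ {x : ℙ K (K × K) | act (RingHom.id K) 1 0 0 1 det_one x = x}).ncard := by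
        refine lt_of_lt_of_le hbig2 (Set.ncard_le_ncard ?_ (Set.toFinite _))
        rintro x ⟨_, hx2⟩
        refine ⟨?_, ?_⟩
        · rw [Set.mem_setOf_eq, act_scalar det_one x]; exact hx2.symm
        · rw [Set.mem_setOf_eq]; exact act_scalar det_one x
      obtain ⟨α', β', γ', δ', hdetψ', -, -, -, -, hNeq⟩ :=
        twisted_structure (RingHom.id K) (RingHom.id K) hdetN h3''
      have hNuniv : {x : ℙ K (K × K) | act (RingHom.id K) 1 0 0 1 det_one x
          = act (RingHom.id K) n1 n2 n3 n4 hdetN x} = Set.univ := by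
        rw [hNeq, id_fix_univ, Set.image_univ]
        exact Set.range_eq_univ.mpr (act_surjective _ _)
      have hNid : ∀ x : ℙ K (K × K), act (RingHom.id K) n1 n2 n3 n4 hdetN x = x := by
        intro x
        have hx : x ∈ {x : ℙ K (K × K) | act (RingHom.id K) 1 0 0 1 det_one x
            = act (RingHom.id K) n1 n2 n3 n4 hdetN x} := by rw [hNuniv]; trivial
        rw [Set.mem_setOf_eq, act_scalar det_one x] at hx
        exact hx.symm
      have hinter : ({x : ℙ K (K × K) | act (iterateFrobenius K p e) 1 0 0 1 det_one x = x}
          ∩ {x : ℙ K (K × K) | act (RingHom.id K) n1 n2 n3 n4 hdetN x = x})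
          = {x : ℙ K (K × K) | act (iterateFrobenius K p e) 1 0 0 1 det_one x = x} := by
        rw [Set.inter_eq_left]
        intro x _
        exact hNid x
      have hfinal : ({x : ℙ K (K × K) |
          act (iterateFrobenius K p e) 1 0 0 1 det_one x = x}).ncard = p ^ e + 1 :=
        card_fix_set p hp he0 he_2s hKcard
      rw [hScard, hseteq, hinter, hfinal, hem]
    · left
      rw [hScard, hseteq]
      omega
  · -- Case B : e = 2m, Frobenius^s acts as Frobenius^m on the fixed field
    have he2m : e = 2 * m := by
      obtain ⟨c, hc⟩ := hm_e
      have hc2 : c ∣ 2 := by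
        have h2' := he_2m
        rw [hc, Nat.mul_comm 2 m] at h2'
        exact (Nat.mul_dvd_mul_iff_left hm0).mp h2'
      rcases (Nat.dvd_prime Nat.prime_two).mp hc2 with rfl | rfl
      · exfalso
        apply hcase
        rw [hc, mul_one]
        exact hm_s
      · rw [hc, mul_comm]
    have hsmod : s % e = m := by
      obtain ⟨s', hs'⟩ := hm_s
      have hodd : s' % 2 = 1 := by
        rcases Nat.even_or_odd s' with he' | ho'
        · obtain ⟨t, ht⟩ := he'
          exfalso
          apply hcase
          rw [he2m, hs', ht]
          exact ⟨t, by ring⟩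
        · exact Nat.odd_iff.mp ho'
      obtain ⟨t, ht⟩ : ∃ t, s' = 2 * t + 1 := ⟨s' / 2, by omega⟩
      have hs2 : s = m + t * (2 * m) := by rw [hs', ht]; ring
      rw [he2m, hs2, Nat.add_mul_mod_self_right, Nat.mod_eq_of_lt (by omega)]
    set g1 : K := β ^ p ^ s * α - δ ^ p ^ s * γ with hg1
    set g2 : K := β ^ p ^ s * β - δ ^ p ^ s * δ with hg2
    set g3 : K := -(α ^ p ^ s * α) + γ ^ p ^ s * γ with hg3
    set g4 : K := -(α ^ p ^ s * β) + γ ^ p ^ s * δ with hg4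
    have hdetfactor : β ^ p ^ s * γ ^ p ^ s - δ ^ p ^ s * α ^ p ^ s ≠ 0 := by
      intro hc
      apply hdetψ
      have h0 : iterateFrobenius K p s (β * γ - δ * α) = iterateFrobenius K p s 0 := by
        rw [map_zero, map_sub, map_mul, map_mul]
        simp only [iterateFrobenius_def]
        linear_combination hc
      have h1 := (iterateFrobenius K p s).injective h0
      linear_combination -h1
    have hdetG' : g1 * g4 - g2 * g3 ≠ 0 := by
      have hid : g1 * g4 - g2 * g3
          = (β ^ p ^ s * γ ^ p ^ s - δ ^ p ^ s * α ^ p ^ s) * (α * δ - β * γ) := by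
        rw [hg1, hg2, hg3, hg4]; ring
      rw [hid]
      exact mul_ne_zero hdetfactor hdetψ
    have hcond : ∀ x ∈ {x : ℙ K (K × K) |
        act (iterateFrobenius K p e) 1 0 0 1 det_one x = x},
        (x ∈ ψ ⁻¹' Fι ↔ act (iterateFrobenius K p m) 1 0 0 1 det_one x
          = act (RingHom.id K) g1 g2 g3 g4 hdetG' x) := by
      intro x hx
      obtain ⟨u, v, h, rfl, hu, hv⟩ := fixρ_reps _ hx
      rw [iterateFrobenius_def] at hu hv
      have hus : u ^ p ^ s = u ^ p ^ m := by
        rw [pow_fix_mod he0 hu, hsmod]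
      have hvs : v ^ p ^ s = v ^ p ^ m := by
        rw [pow_fix_mod he0 hv, hsmod]
      have hψx : ψ (pt u v h) = pt (α * u + β * v) (γ * u + δ * v) (vec_ne hdetψ h) :=
        psi_pt hdetψ h
      have hXs : (α * u + β * v) ^ p ^ s = α ^ p ^ s * u ^ p ^ m + β ^ p ^ s * v ^ p ^ m := by
        rw [frob_add_pow, mul_pow, mul_pow, hus, hvs]
      have hYs : (γ * u + δ * v) ^ p ^ s = γ ^ p ^ s * u ^ p ^ m + δ ^ p ^ s * v ^ p ^ m := by
        rw [frob_add_pow, mul_pow, mul_pow, hus, hvs]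
      rw [Set.mem_preimage, hFιdef, Set.mem_setOf_eq, hψx,
        J_pt _ _ (rho_vec_ne _ (pair_swap_ne (vec_ne hdetψ h))), pt_eq_pt_iff,
        actρ_pt _ h (rho_vec_ne _ h), G_pt hdetG' h, pt_eq_pt_iff]
      simp only [iterateFrobenius_def]
      rw [hXs, hYs]
      constructor
      · intro hc
        rw [hg1, hg2, hg3, hg4]
        linear_combination hc
      · intro hc
        rw [hg1, hg2, hg3, hg4] at hc
        linear_combination hc
    have hseteq : ({x : ℙ K (K × K) |
          act (iterateFrobenius K p e) 1 0 0 1 det_one x = x} ∩ ψ ⁻¹' Fι)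
        = ({x : ℙ K (K × K) | act (iterateFrobenius K p e) 1 0 0 1 det_one x = x}
          ∩ {x : ℙ K (K × K) | act (iterateFrobenius K p m) 1 0 0 1 det_one x
            = act (RingHom.id K) g1 g2 g3 g4 hdetG' x}) := by
      ext x
      simp only [Set.mem_inter_iff]
      constructor
      · rintro ⟨hx1, hx2⟩; exact ⟨hx1, (hcond x hx1).mp hx2⟩
      · rintro ⟨hx1, hx2⟩; exact ⟨hx1, (hcond x hx1).mpr hx2⟩
    by_cases hbig2 : 2 < ({x : ℙ K (K × K) |
          act (iterateFrobenius K p e) 1 0 0 1 det_one x = x}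
        ∩ {x : ℙ K (K × K) | act (iterateFrobenius K p m) 1 0 0 1 det_one x
          = act (RingHom.id K) g1 g2 g3 g4 hdetG' x}).ncard
    · right
      have h3'' : 2 < ({x : ℙ K (K × K) | act (iterateFrobenius K p m) 1 0 0 1 det_one x
            = act (RingHom.id K) g1 g2 g3 g4 hdetG' x}
          ∩ {x : ℙ K (K × K) | act (iterateFrobenius K p e) 1 0 0 1 det_one x = x}).ncard := by
        rwa [Set.inter_comm] at hbig2
      obtain ⟨α₁, β₁, γ₁, δ₁, hdetψ₁, k1, k2, k3, k4, hT₁eq⟩ :=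
        twisted_structure (iterateFrobenius K p m) (iterateFrobenius K p e) hdetG' h3''
      rw [iterateFrobenius_def] at k1 k2 k3 k4
      have hsub : {x : ℙ K (K × K) | act (iterateFrobenius K p m) 1 0 0 1 det_one x
            = act (RingHom.id K) g1 g2 g3 g4 hdetG' x}
          ⊆ {x : ℙ K (K × K) | act (iterateFrobenius K p e) 1 0 0 1 det_one x = x} := by
        rw [hT₁eq]
        rintro x ⟨y, hy, rfl⟩
        obtain ⟨u, v, h, rfl, hu, hv⟩ := fixρ_reps _ hy
        rw [iterateFrobenius_def] at hu hv
        have hue : u ^ p ^ e = u := pow_fix_dvd hm_e hu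
        have hve : v ^ p ^ e = v := pow_fix_dvd hm_e hv
        rw [Set.mem_setOf_eq, psi_pt hdetψ₁ h]
        exact fixρ_of_reps _ _
          (by rw [iterateFrobenius_def]; exact frob_fix_comb p k1 k2 hue hve)
          (by rw [iterateFrobenius_def]; exact frob_fix_comb p k3 k4 hue hve)
      have hinter : ({x : ℙ K (K × K) | act (iterateFrobenius K p e) 1 0 0 1 det_one x = x}
          ∩ {x : ℙ K (K × K) | act (iterateFrobenius K p m) 1 0 0 1 det_one x
            = act (RingHom.id K) g1 g2 g3 g4 hdetG' x})
          = {x : ℙ K (K × K) | act (iterateFrobenius K p m) 1 0 0 1 det_one x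
            = act (RingHom.id K) g1 g2 g3 g4 hdetG' x} :=
        Set.inter_eq_right.mpr hsub
      have hfinal : ({x : ℙ K (K × K) |
          act (iterateFrobenius K p m) 1 0 0 1 det_one x = x}).ncard = p ^ m + 1 :=
        card_fix_set p hp hm0 (Dvd.dvd.mul_left hm_s 2) hKcard
      rw [hScard, hseteq, hinter, hT₁eq,
        Set.ncard_image_of_injective _ (act_injective _ _), hfinal]
    · left
      rw [hScard, hseteq]
      omega

end Count

end Stmt4Aux

open Stmt4Aux Projectivization in
open scoped LinearAlgebra.Projectivization in
theorem stmt4 (p s : ℕ) (hp : p.Prime) (hpodd : Odd p) (hs : 1 < s)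
    (q : ℕ) (hq : q = p ^ s)
    (i m : ℕ) (hi0 : 0 < i) (his : i < s) (hm : m = Nat.gcd i s)
    (K : Type) [Field K] [Fintype K] (hK : Fintype.card K = q ^ 2)
    (a b : K) (hab : (a, b) ≠ (0, 0)) :
    ({u : K | u ^ (q + 1) = 1 ∧
        b ^ q + a ^ q * u + a * u ^ (p ^ i) + b * u ^ (p ^ i + 1) = 0}).ncard
      ∈ ({0, 1, 2, p ^ m + 1} : Set ℕ) := by
  classical
  have hp2 : 1 < p := hp.one_lt
  have hs0 : 0 < s := by omega
  haveI hfp : Fact p.Prime := ⟨hp⟩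
  have hcard2s : Fintype.card K = p ^ (2 * s) := by
    rw [hK, hq, ← pow_mul, Nat.mul_comm]
  haveI hcharp : CharP K p := by
    haveI hrc : CharP K (ringChar K) := ringChar.charP K
    obtain ⟨n, hrprime, hcardr⟩ := FiniteField.card K (ringChar K)
    have hdvd : p ∣ ringChar K ^ (n : ℕ) := by
      rw [← hcardr, hcard2s]
      exact dvd_pow_self p (by omega)
    have hpr : p = ringChar K :=
      (Nat.prime_dvd_prime_iff_eq hp hrprime).mp (hp.dvd_of_dvd_pow hdvd)
    exact hpr ▸ hrc
  haveI hexp : ExpChar K p := ExpChar.prime hp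
  have hallK : ∀ x : K, x ^ p ^ (2 * s) = x := fun x => by
    rw [← hcard2s]; exact FiniteField.pow_card x
  set Saff : Set K := {u : K | u ^ (q + 1) = 1 ∧
      b ^ q + a ^ q * u + a * u ^ (p ^ i) + b * u ^ (p ^ i + 1) = 0} with hSaff
  have hmemfin : ∀ n : ℕ, n ≤ 2 → n ∈ ({0, 1, 2, p ^ m + 1} : Set ℕ) := by
    intro n hn
    simp only [Set.mem_insert_iff, Set.mem_singleton_iff]
    omega
  by_cases hd0 : a ^ (q + 1) - b ^ (q + 1) = 0
  · -- degenerate case: at most two solutions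
    have hb : b ≠ 0 := by
      intro hb0
      rw [hb0, zero_pow (by omega : q + 1 ≠ 0), sub_zero] at hd0
      have ha0 : a = 0 := pow_eq_zero_iff (by omega : q + 1 ≠ 0) |>.mp hd0
      exact hab (by rw [ha0, hb0])
    have hsub : Saff ⊆ {-(a / b), (-(a ^ q) / b) ^ p ^ (2 * s - i)} := by
      rintro u ⟨hu1, hu2⟩
      have hfact : (b * u + a) * (b * u ^ p ^ i + a ^ q) = 0 := by
        have hexp1 : (b * u + a) * (b * u ^ p ^ i + a ^ q)
            = b * (b ^ q + a ^ q * u + a * u ^ p ^ i + b * u ^ (p ^ i + 1))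
              + (a ^ (q + 1) - b ^ (q + 1)) := by ring
        rw [hexp1, hu2, hd0]; ring
      rcases mul_eq_zero.mp hfact with h1 | h2
      · left
        have : u = -(a / b) := by field_simp; linear_combination h1
        exact this
      · right
        have hui : u ^ p ^ i = -(a ^ q) / b := by field_simp; linear_combination h2
        have hiexp : p ^ i * p ^ (2 * s - i) = p ^ (2 * s) := by
          rw [← pow_add]
          congr 1
          omega
        calc u = u ^ p ^ (2 * s) := (hallK u).symm
          _ = (u ^ p ^ i) ^ p ^ (2 * s - i) := by rw [← pow_mul, hiexp]
          _ = (-(a ^ q) / b) ^ p ^ (2 * s - i) := by rw [hui]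
    have hle : Saff.ncard ≤ 2 := by
      refine le_trans (Set.ncard_le_ncard hsub (Set.toFinite _)) ?_
      refine le_trans (Set.ncard_insert_le _ _) ?_
      simp
    exact hmemfin _ hle
  · -- non-degenerate case: use the projective machinery
    have hdetG : (-(a ^ q)) * a - (-(b ^ q)) * b ≠ 0 := by
      intro hc
      apply hd0
      linear_combination -hc
    set T : Set (ℙ K (K × K)) :=
      {x | act (iterateFrobenius K p i) 1 0 0 1 det_one x
        = act (RingHom.id K) (-(a ^ q)) (-(b ^ q)) b a hdetG x} with hTdef
    set Fι : Set (ℙ K (K × K)) :=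
      {x | act (iterateFrobenius K p s) 0 1 1 0 detJ x = x} with hFιdef
    have hqs : p ^ s = q := hq.symm
    have hinj : Set.InjOn (fun u : K => pt u 1 (pairc1_ne u)) Saff := by
      intro u _ u' _ huu
      have := (pt_eq_pt_iff (pairc1_ne u) (pairc1_ne u')).mp huu
      simpa using this
    have himg : (fun u : K => pt u 1 (pairc1_ne u)) '' Saff = T ∩ Fι := by
      ext x
      simp only [Set.mem_image, Set.mem_inter_iff]
      constructor
      · rintro ⟨u, ⟨hu1, hu2⟩, rfl⟩
        constructor
        · rw [hTdef, Set.mem_setOf_eq,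
            actρ_pt _ (pairc1_ne u) (rho_vec_ne _ (pairc1_ne u)),
            G_pt hdetG (pairc1_ne u), pt_eq_pt_iff]
          simp only [iterateFrobenius_def, one_pow]
          linear_combination hu2
        · rw [hFιdef, Set.mem_setOf_eq,
            J_pt _ (pairc1_ne u) (rho_vec_ne _ (pair_swap_ne (pairc1_ne u))), pt_eq_pt_iff]
          simp only [iterateFrobenius_def, one_pow, hqs]
          rw [one_mul]
          linear_combination -hu1
      · rintro ⟨hxT, hxF⟩
        obtain ⟨u₀, v₀, h, rfl⟩ := exists_pt x
        rw [hFιdef, Set.mem_setOf_eq,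
          J_pt _ h (rho_vec_ne _ (pair_swap_ne h)), pt_eq_pt_iff] at hxF
        simp only [iterateFrobenius_def, hqs] at hxF
        have hv₀ : v₀ ≠ 0 := by
          intro hv0
          rw [hv0] at hxF
          have hu0 : u₀ = 0 := by
            have h0 : u₀ * u₀ ^ q = 0 := by rw [← hxF]; ring
            rcases mul_eq_zero.mp h0 with h' | h'
            · exact h'
            · exact pow_eq_zero_iff (by
                have : 0 < q := by rw [hq]; positivity
                omega) |>.mp h'
          exact h (pair_zero.mpr ⟨hu0, hv0⟩)
        rw [hTdef, Set.mem_setOf_eq,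
          actρ_pt _ h (rho_vec_ne _ h), G_pt hdetG h, pt_eq_pt_iff] at hxT
        simp only [iterateFrobenius_def] at hxT
        have hvq : v₀ ^ (q + 1) = u₀ ^ (q + 1) := by
          calc v₀ ^ (q + 1) = v₀ ^ q * v₀ := by ring
            _ = u₀ * u₀ ^ q := hxF
            _ = u₀ ^ (q + 1) := by ring
        refine ⟨u₀ / v₀, ⟨?_, ?_⟩, ?_⟩
        · rw [div_pow, hvq, div_self (pow_ne_zero _ (by
            intro hu0
            rw [hu0, zero_pow (by omega : q + 1 ≠ 0)] at hvq
            exact hv₀ (pow_eq_zero_iff (by omega : q + 1 ≠ 0) |>.mp hvq)))]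
        · have hvpi : v₀ ^ p ^ i ≠ 0 := pow_ne_zero _ hv₀
          obtain ⟨w, hw⟩ : ∃ w, w = u₀ / v₀ := ⟨_, rfl⟩
          have hu : u₀ = w * v₀ := by rw [hw]; exact (div_mul_cancel₀ u₀ hv₀).symm
          rw [← hw]
          rw [hu] at hxT
          have hz : (b ^ q + a ^ q * w + a * w ^ p ^ i + b * w ^ (p ^ i + 1))
              * (v₀ ^ p ^ i * v₀) = 0 := by
            linear_combination hxT
          exact (mul_eq_zero.mp hz).resolve_right (mul_ne_zero hvpi hv₀)
        · rw [pt_eq_pt_iff]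
          field_simp
    have hbij : Saff.ncard = (T ∩ Fι).ncard := by
      rw [← himg, Set.ncard_image_of_injOn hinj]
    rcases projective_count p hp2 hi0 hs0 hm hcard2s hdetG with hle | heq
    · exact hmemfin _ (by rw [hbij]; exact hle)
    · rw [hbij, heq]
      simp only [Set.mem_insert_iff, Set.mem_singleton_iff]
      tauto
end

section
/- Let q = p^s with p prime and s > 1, let 0 < i < s with m = gcd(i, s), and suppose p^m ≥ 3. For x, y, z, w ∈ F_{q^2}, let M(x,y,z,w) be the 4×4 matrix over F_{q^2} with rows (1, 1, 1, 1), (x, y, z, w), (x^{p^i}, y^{p^i}, z^{p^i}, w^{p^i}), (x^{p^i+1}, y^{p^i+1}, z^{p^i+1}, w^{p^i+1}). Then for any three pairwise distinct elements x, y, z ∈ U_{q+1}, the number of elements w ∈ U_{q+1} \ {x, y, z} with det M(x,y,z,w) = 0 equals p^m − 2; equivalently, the blocks {x,y,z,w} ∈ binom(U_{q+1}, 4) with det M(x,y,z,w) = 0 form a 3-(q+1, 4, p^m − 2) design on the point set U_{q+1}. -/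
lemma det4id {K : Type} [CommRing K] (x y z w X Y Z W : K) :
    Matrix.det !![1, 1, 1, 1; x, y, z, w; X, Y, Z, W; x*X, y*Y, z*Z, w*W]
      = (w-y)*(z-x)*((W-X)*(Z-Y)) - (w-x)*(z-y)*((W-Y)*(Z-X)) := by
  simp [Matrix.det_succ_row_zero, Fin.sum_univ_succ, Fin.succAbove]
  ring

lemma pow_pow_fix {K : Type} [Monoid K] {c : K} {t : ℕ} (h : c ^ t = c) : ∀ k, c ^ t ^ k = c
  | 0 => by rw [pow_zero, pow_one]
  | k+1 => by rw [pow_succ, pow_mul, pow_pow_fix h k, h]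

lemma aux_gcd (p i s d : ℕ) (hp : 0 < p) (hdi : d ∣ p ^ i - 1) (hds : d ∣ p ^ s - 1) :
    d ∣ p ^ Nat.gcd i s - 1 := by
  have h1 : ∀ n : ℕ, d ∣ p ^ n - 1 → (p : ZMod d) ^ n = 1 := by
    intro n hn
    have h := (Nat.modEq_iff_dvd' (Nat.one_le_pow n p hp)).mpr hn
    have h2 := (ZMod.natCast_eq_natCast_iff _ _ _).mpr h
    push_cast at h2
    exact h2.symm
  have h2 : (p : ZMod d) ^ Nat.gcd i s = 1 := pow_gcd_eq_one.mpr ⟨h1 i hdi, h1 s hds⟩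
  have h3 : (1 : ℕ) ≡ p ^ Nat.gcd i s [MOD d] := by
    refine (ZMod.natCast_eq_natCast_iff _ _ _).mp ?_
    push_cast
    exact h2.symm
  exact (Nat.modEq_iff_dvd' (Nat.one_le_pow _ _ hp)).mp h3

theorem stmt13 (p s : ℕ) (hp : p.Prime) (hs : 1 < s) (q : ℕ) (hq : q = p ^ s)
    (i m : ℕ) (hi0 : 0 < i) (his : i < s) (hm : m = Nat.gcd i s) (hpm : 3 ≤ p ^ m)
    (K : Type) [Field K] [Fintype K] [DecidableEq K] (hK : Fintype.card K = q ^ 2)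
    (x y z : K) (hx : x ^ (q + 1) = 1) (hy : y ^ (q + 1) = 1) (hz : z ^ (q + 1) = 1)
    (hxy : x ≠ y) (hxz : x ≠ z) (hyz : y ≠ z) :
    {w : K | w ^ (q + 1) = 1 ∧ w ≠ x ∧ w ≠ y ∧ w ≠ z ∧
      Matrix.det !![1, 1, 1, 1;
                    x, y, z, w;
                    x ^ (p ^ i), y ^ (p ^ i), z ^ (p ^ i), w ^ (p ^ i);
                    x ^ (p ^ i + 1), y ^ (p ^ i + 1), z ^ (p ^ i + 1), w ^ (p ^ i + 1)]
        = 0}.ncard = p ^ m - 2 := by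
  subst hq
  -- characteristic
  haveI := ringChar.charP K
  have hcp' := CharP.char_is_prime K (ringChar K)
  obtain ⟨n', hprime', hcard'⟩ := FiniteField.card K (ringChar K)
  have hrc : ringChar K = p := by
    have h1 : ringChar K ∣ Fintype.card K := by
      rw [hcard']; exact dvd_pow_self _ n'.pos.ne'
    rw [hK, ← pow_mul] at h1
    exact (Nat.prime_dvd_prime_iff_eq hprime' hp).mp (hprime'.dvd_of_dvd_pow h1)
  haveI : CharP K p := hrc ▸ ringChar.charP K
  haveI : Fact p.Prime := ⟨hp⟩
  have hp1 : 0 < p := hp.pos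
  -- unit circle basics
  have hU0 : ∀ a : K, a ^ (p ^ s + 1) = 1 → a ≠ 0 := by
    intro a ha h
    rw [h, zero_pow (Nat.succ_ne_zero _)] at ha
    exact zero_ne_one ha
  have hUinv : ∀ a : K, a ^ (p ^ s + 1) = 1 → a ^ (p ^ s) = a⁻¹ := by
    intro a ha
    rw [pow_succ] at ha
    exact eq_inv_of_mul_eq_one_left ha
  have hx0 := hU0 x hx
  have hy0 := hU0 y hy
  have hz0 := hU0 z hz
  have hxq := hUinv x hx
  have hyq := hUinv y hy
  have hzq := hUinv z hz
  have hzyne : z - y ≠ 0 := sub_ne_zero.mpr (Ne.symm hyz)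
  have hzxne : z - x ≠ 0 := sub_ne_zero.mpr (Ne.symm hxz)
  have hxyne : x - y ≠ 0 := sub_ne_zero.mpr hxy
  -- determinant factorization
  have hdet : ∀ w : K,
      Matrix.det !![1, 1, 1, 1;
                    x, y, z, w;
                    x ^ (p ^ i), y ^ (p ^ i), z ^ (p ^ i), w ^ (p ^ i);
                    x ^ (p ^ i + 1), y ^ (p ^ i + 1), z ^ (p ^ i + 1), w ^ (p ^ i + 1)]
      = (w-y)*(z-x)*((w-x)*(z-y))^(p^i) - (w-x)*(z-y)*((w-y)*(z-x))^(p^i) := by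
    intro w
    rw [pow_succ' x (p ^ i), pow_succ' y (p ^ i), pow_succ' z (p ^ i), pow_succ' w (p ^ i),
      det4id]
    rw [mul_pow, mul_pow, sub_pow_char_pow, sub_pow_char_pow, sub_pow_char_pow,
      sub_pow_char_pow]
  -- the two sets
  set T : Set K := {c : K | c ^ p ^ m = c ∧ c ≠ 0 ∧ c ≠ 1} with hT
  have hmi : m ∣ i := hm ▸ Nat.gcd_dvd_left i s
  have hms : m ∣ s := hm ▸ Nat.gcd_dvd_right i s
  have hbij : Set.BijOn (fun w => ((w - y)*(z - x)) / ((w - x)*(z - y)))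
      {w : K | w ^ (p ^ s + 1) = 1 ∧ w ≠ x ∧ w ≠ y ∧ w ≠ z ∧
      Matrix.det !![1, 1, 1, 1;
                    x, y, z, w;
                    x ^ (p ^ i), y ^ (p ^ i), z ^ (p ^ i), w ^ (p ^ i);
                    x ^ (p ^ i + 1), y ^ (p ^ i + 1), z ^ (p ^ i + 1), w ^ (p ^ i + 1)]
        = 0} T := by
    refine ⟨?_, ?_, ?_⟩
    · -- MapsTo
      rintro w ⟨hwU, hwx, hwy, hwz, hdet0⟩
      have hw0 := hU0 w hwU
      have hwq := hUinv w hwU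
      have hD : (w - x)*(z - y) ≠ 0 := mul_ne_zero (sub_ne_zero.mpr hwx) hzyne
      have hN : (w - y)*(z - x) ≠ 0 := mul_ne_zero (sub_ne_zero.mpr hwy) hzxne
      set c : K := ((w - y)*(z - x)) / ((w - x)*(z - y)) with hc
      have hc0 : c ≠ 0 := div_ne_zero hN hD
      have hc1 : c ≠ 1 := by
        intro h1
        rw [hc, div_eq_one_iff_eq hD] at h1
        have h2 : (w - z)*(y - x) = 0 := by linear_combination h1
        rcases mul_eq_zero.mp h2 with h3 | h3
        · exact hwz (sub_eq_zero.mp h3)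
        · exact hxy (sub_eq_zero.mp h3).symm
      have hcr : c ^ p ^ i = c := by
        have h0 : (w-y)*(z-x)*((w-x)*(z-y))^(p^i) - (w-x)*(z-y)*((w-y)*(z-x))^(p^i) = 0 := by
          rw [← hdet w]; exact hdet0
        have h1 : (w-y)*(z-x)*((w-x)*(z-y))^(p^i) = (w-x)*(z-y)*((w-y)*(z-x))^(p^i) :=
          sub_eq_zero.mp h0
        rw [hc, div_pow, div_eq_div_iff (pow_ne_zero _ hD) hD]
        linear_combination -h1
      have hcs : c ^ p ^ s = c := by
        have hNq : ((w - y)*(z - x)) ^ p ^ s = ((w - y)*(z - x)) / (x*y*z*w) := by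
          rw [mul_pow, sub_pow_char_pow, sub_pow_char_pow, hwq, hyq, hzq, hxq]
          field_simp
          ring
        have hDq : ((w - x)*(z - y)) ^ p ^ s = ((w - x)*(z - y)) / (x*y*z*w) := by
          rw [mul_pow, sub_pow_char_pow, sub_pow_char_pow, hwq, hyq, hzq, hxq]
          field_simp
          ring
        have hX : (x*y*z*w : K) ≠ 0 := by
          exact mul_ne_zero (mul_ne_zero (mul_ne_zero hx0 hy0) hz0) hw0
        rw [hc, div_pow, hNq, hDq, div_div_div_comm, div_self hX, div_one]
      -- combine to p^m
      have hcm : c ^ p ^ m = c := by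
        have cani : c ^ (p ^ i - 1) = 1 := by
          have h1 : c ^ (p ^ i - 1) * c = 1 * c := by
            rw [← pow_succ, Nat.sub_add_cancel (Nat.one_le_pow _ _ hp1), hcr, one_mul]
          exact mul_right_cancel₀ hc0 h1
        have cans : c ^ (p ^ s - 1) = 1 := by
          have h1 : c ^ (p ^ s - 1) * c = 1 * c := by
            rw [← pow_succ, Nat.sub_add_cancel (Nat.one_le_pow _ _ hp1), hcs, one_mul]
          exact mul_right_cancel₀ hc0 h1
        have hd : orderOf c ∣ p ^ m - 1 := by
          rw [hm]
          exact aux_gcd p i s _ hp1 (orderOf_dvd_of_pow_eq_one cani)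
            (orderOf_dvd_of_pow_eq_one cans)
        have h1 : c ^ (p ^ m - 1) = 1 := orderOf_dvd_iff_pow_eq_one.mp hd
        calc c ^ p ^ m = c ^ (p ^ m - 1) * c := by
              rw [← pow_succ, Nat.sub_add_cancel (Nat.one_le_pow _ _ hp1)]
          _ = c := by rw [h1, one_mul]
      exact ⟨hcm, hc0, hc1⟩
    · -- InjOn
      rintro w1 ⟨hw1U, hw1x, hw1y, hw1z, -⟩ w2 ⟨hw2U, hw2x, hw2y, hw2z, -⟩ heq
      have hD1 : (w1 - x)*(z - y) ≠ 0 := mul_ne_zero (sub_ne_zero.mpr hw1x) hzyne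
      have hD2 : (w2 - x)*(z - y) ≠ 0 := mul_ne_zero (sub_ne_zero.mpr hw2x) hzyne
      simp only at heq
      rw [div_eq_div_iff hD1 hD2] at heq
      have h5 : (z-x)*(z-y)*((w2-w1)*(x-y)) = 0 := by linear_combination heq
      rcases mul_eq_zero.mp h5 with h | h
      · rcases mul_eq_zero.mp h with h' | h'
        · exact absurd h' hzxne
        · exact absurd h' hzyne
      · rcases mul_eq_zero.mp h with h' | h'
        · exact (sub_eq_zero.mp h').symm
        · exact absurd h' hxyne
    · -- SurjOn
      rintro c ⟨hct, hc0, hc1⟩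
      have hci : c ^ p ^ i = c := by
        obtain ⟨k, hk⟩ := hmi
        rw [hk, pow_mul]
        exact pow_pow_fix hct k
      have hcs : c ^ p ^ s = c := by
        obtain ⟨k, hk⟩ := hms
        rw [hk, pow_mul]
        exact pow_pow_fix hct k
      have hDd : c*(z-y) - (z-x) ≠ 0 := by
        intro h
        have e1 : c*(z-y) = z-x := sub_eq_zero.mp h
        have e2 : (c*(z-y)) ^ p ^ s = (z-x) ^ p ^ s := by rw [e1]
        rw [mul_pow, hcs, sub_pow_char_pow, sub_pow_char_pow, hxq, hyq, hzq] at e2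
        field_simp at e2
        have h6 : z*((y-x)*(z-x)) = 0 := by linear_combination z*e2 + (z*x)*h
        rcases mul_eq_zero.mp h6 with h' | h'
        · exact hz0 h'
        · rcases mul_eq_zero.mp h' with h'' | h''
          · exact hxy (sub_eq_zero.mp h'').symm
          · exact hxz (sub_eq_zero.mp h'').symm
      have hNn : c*x*(z-y) - y*(z-x) ≠ 0 := by
        intro h
        have e1 : c*x*(z-y) = y*(z-x) := sub_eq_zero.mp h
        have e2 : (c*x*(z-y)) ^ p ^ s = (y*(z-x)) ^ p ^ s := by rw [e1]
        rw [mul_pow, mul_pow, mul_pow, hcs, sub_pow_char_pow, sub_pow_char_pow,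
          hxq, hyq, hzq] at e2
        field_simp at e2
        have h6 : z*y*((x-z)*(y-x)) = 0 := by linear_combination (z*y*x)*e2 + (y*z)*h
        rcases mul_eq_zero.mp h6 with h' | h'
        · rcases mul_eq_zero.mp h' with h'' | h''
          · exact hz0 h''
          · exact hy0 h''
        · rcases mul_eq_zero.mp h' with h'' | h''
          · exact hxz (sub_eq_zero.mp h'')
          · exact hxy (sub_eq_zero.mp h'').symm
      set w : K := (c*x*(z-y) - y*(z-x)) / (c*(z-y) - (z-x)) with hwdef
      have hwx : w ≠ x := by
        intro h
        rw [hwdef] at h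
        have h1 := (div_eq_iff hDd).mp h
        have h2 : (x-y)*(z-x) = 0 := by linear_combination h1
        rcases mul_eq_zero.mp h2 with h' | h'
        · exact hxy (sub_eq_zero.mp h')
        · exact hxz (sub_eq_zero.mp h').symm
      have hwy : w ≠ y := by
        intro h
        rw [hwdef] at h
        have h1 := (div_eq_iff hDd).mp h
        have h2 : c*((x-y)*(z-y)) = 0 := by linear_combination h1
        rcases mul_eq_zero.mp h2 with h' | h'
        · exact hc0 h'
        · rcases mul_eq_zero.mp h' with h'' | h''
          · exact hxy (sub_eq_zero.mp h'')
          · exact hyz (sub_eq_zero.mp h'').symm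
      have hwz : w ≠ z := by
        intro h
        rw [hwdef] at h
        have h1 := (div_eq_iff hDd).mp h
        have h2 : (1-c)*((z-x)*(z-y)) = 0 := by linear_combination h1
        rcases mul_eq_zero.mp h2 with h' | h'
        · exact hc1 (by linear_combination -h')
        · rcases mul_eq_zero.mp h' with h'' | h''
          · exact hxz (sub_eq_zero.mp h'').symm
          · exact hyz (sub_eq_zero.mp h'').symm
      have hw0 : w ≠ 0 := by
        rw [hwdef]
        exact div_ne_zero hNn hDd
      have hwU : w ^ (p ^ s + 1) = 1 := by
        have hNq : (c*x*(z-y) - y*(z-x)) ^ p ^ s = -(c*(z-y) - (z-x)) / (x*y*z) := by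
          rw [sub_pow_char_pow, mul_pow, mul_pow, mul_pow, hcs, sub_pow_char_pow,
            sub_pow_char_pow, hxq, hyq, hzq]
          field_simp
          ring
        have hDq : (c*(z-y) - (z-x)) ^ p ^ s = -(c*x*(z-y) - y*(z-x)) / (x*y*z) := by
          rw [sub_pow_char_pow, mul_pow, hcs, sub_pow_char_pow, sub_pow_char_pow,
            hxq, hyq, hzq]
          field_simp
          ring
        have hA : (x*y*z : K) ≠ 0 := mul_ne_zero (mul_ne_zero hx0 hy0) hz0
        rw [pow_succ, hwdef, div_pow, hNq, hDq, div_div_div_comm, div_self hA, div_one,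
          neg_div_neg_eq, div_mul_div_comm,
          div_eq_one_iff_eq (mul_ne_zero hNn hDd)]
        ring
      have h1 : (w - y)*(c*(z-y) - (z-x)) = c*((x-y)*(z-y)) := by
        rw [hwdef, sub_mul, div_mul_cancel₀ _ hDd]; ring
      have h2 : (w - x)*(c*(z-y) - (z-x)) = (x-y)*(z-x) := by
        rw [hwdef, sub_mul, div_mul_cancel₀ _ hDd]; ring
      have hfw : ((w - y)*(z - x)) / ((w - x)*(z - y)) = c := by
        rw [div_eq_iff (mul_ne_zero (sub_ne_zero.mpr hwx) hzyne)]
        refine mul_right_cancel₀ (mul_ne_zero hDd hDd) ?_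
        linear_combination ((z-x)*(c*(z-y)-(z-x)))*h1 - (c*(z-y)*(c*(z-y)-(z-x)))*h2
      refine ⟨w, ⟨hwU, hwx, hwy, hwz, ?_⟩, hfw⟩
      have hNcD : (w - y)*(z - x) = c * ((w - x)*(z - y)) :=
        (div_eq_iff (mul_ne_zero (sub_ne_zero.mpr hwx) hzyne)).mp hfw
      rw [hdet w, hNcD, mul_pow c ((w - x)*(z - y)) (p ^ i), hci]
      ring
  -- counting T
  have hTcard : T.ncard = p ^ m - 2 := by
    have hnpos : 0 < p ^ m - 1 := by omega
    obtain ⟨k, hk⟩ : m ∣ s * 2 := Dvd.dvd.mul_right hms 2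
    have hdvd : p ^ m - 1 ∣ Fintype.card K - 1 := by
      rw [hK, ← pow_mul, hk, pow_mul]
      simpa using Nat.sub_dvd_pow_sub_pow (p ^ m) 1 k
    obtain ⟨g, hg⟩ := IsCyclic.exists_generator (α := Kˣ)
    have hord : orderOf g = Fintype.card Kˣ := by
      rw [orderOf_eq_card_of_forall_mem_zpowers hg, Nat.card_eq_fintype_card]
    have hprim : IsPrimitiveRoot g (Fintype.card Kˣ) := hord ▸ IsPrimitiveRoot.orderOf g
    obtain ⟨k', hk'⟩ := hdvd
    have hcardu : Fintype.card Kˣ = k' * (p ^ m - 1) := by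
      rw [Fintype.card_units, hk']; ring
    have hprim2 : IsPrimitiveRoot (g ^ k') (p ^ m - 1) :=
      IsPrimitiveRoot.pow Fintype.card_pos hprim hcardu
    have hprimK : IsPrimitiveRoot (((g ^ k' : Kˣ) : K)) (p ^ m - 1) :=
      (IsPrimitiveRoot.coe_units_iff).mpr hprim2
    have hcardn : (Polynomial.nthRootsFinset (p ^ m - 1) (1 : K)).card = p ^ m - 1 :=
      hprimK.card_nthRootsFinset
    have hmem1 : (1 : K) ∈ Polynomial.nthRootsFinset (p ^ m - 1) (1 : K) :=
      (Polynomial.mem_nthRootsFinset hnpos (1 : K)).mpr (one_pow _)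
    have hTeq : T = ↑((Polynomial.nthRootsFinset (p ^ m - 1) (1 : K)).erase 1) := by
      ext c
      simp only [hT, Set.mem_setOf_eq, Finset.coe_erase, Set.mem_diff,
        Finset.mem_coe, Polynomial.mem_nthRootsFinset hnpos (1 : K), Set.mem_singleton_iff]
      constructor
      · rintro ⟨h1, h2, h3⟩
        refine ⟨?_, h3⟩
        have h4 : c ^ (p ^ m - 1) * c = 1 * c := by
          rw [← pow_succ, Nat.sub_add_cancel (Nat.one_le_pow _ _ hp1), h1, one_mul]
        exact mul_right_cancel₀ h2 h4
      · rintro ⟨h1, h2⟩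
        have h3 : c ≠ 0 := by
          intro h0
          rw [h0, zero_pow (by omega : p ^ m - 1 ≠ 0)] at h1
          exact zero_ne_one h1
        refine ⟨?_, h3, h2⟩
        calc c ^ p ^ m = c ^ (p ^ m - 1) * c := by
              rw [← pow_succ, Nat.sub_add_cancel (Nat.one_le_pow _ _ hp1)]
          _ = c := by rw [h1, one_mul]
    rw [hTeq, Set.ncard_coe_finset, Finset.card_erase_of_mem hmem1, hcardn]
    omega
  calc ({w : K | w ^ (p ^ s + 1) = 1 ∧ w ≠ x ∧ w ≠ y ∧ w ≠ z ∧
      Matrix.det !![1, 1, 1, 1;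
                    x, y, z, w;
                    x ^ (p ^ i), y ^ (p ^ i), z ^ (p ^ i), w ^ (p ^ i);
                    x ^ (p ^ i + 1), y ^ (p ^ i + 1), z ^ (p ^ i + 1), w ^ (p ^ i + 1)]
        = 0}).ncard
      = ((fun w => ((w - y)*(z - x)) / ((w - x)*(z - y))) '' _).ncard :=
        (Set.ncard_image_of_injOn hbij.injOn).symm
    _ = T.ncard := by rw [hbij.image_eq]
    _ = p ^ m - 2 := hTcard
end

section
/- Let q = 3^s with s ≥ 2 an integer, and let h = (q − 3)/2. Then the ternary subfield subcode T_h = {(c_0,…,c_q) ∈ F_3^{q+1} : ∑_{j=0}^q c_j β^{hj} = 0 and ∑_{j=0}^q c_j β^{(h+1)j} = 0} has F_3-dimension q + 1 − 4s (i.e., it contains exactly 3^{q+1−4s} codewords), and its minimum distance is at least 4. -/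
private lemma aux_9le (s : ℕ) (hs : 2 ≤ s) : (9:ℤ) ≤ 3 ^ s := by
  calc (9:ℤ) = 3 ^ 2 := by norm_num
  _ ≤ 3 ^ s := pow_le_pow_right₀ (by norm_num) hs

private lemma aux_core (s : ℕ) (hs : 2 ≤ s) (c e : ℤ) (hc : c = 1 ∨ c = 2)
    (he : e = 1 ∨ e = 2) (t : ℕ) (ht : t < 2 * s)
    (H : c * 3 ^ t ≡ e [ZMOD ((3:ℤ) ^ s + 1)]) : c = e ∧ t = 0 := by
  have h9 : (9:ℤ) ≤ 3 ^ s := aux_9le s hs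
  rcases lt_or_ge t s with hts | hts
  · have hd : ((3:ℤ) ^ s + 1) ∣ (e - c * 3 ^ t) := Int.ModEq.dvd H
    have h3t : (3:ℤ) ^ (t+1) ≤ 3 ^ s := pow_le_pow_right₀ (by norm_num) hts
    have h3tpos : (0:ℤ) < 3 ^ t := by positivity
    have hz : e - c * 3 ^ t = 0 := by
      by_contra hne
      have hle := Int.le_of_dvd (abs_pos.mpr hne) ((dvd_abs _ _).mpr hd)
      have habs : |e - c * 3 ^ t| ≤ 2 * 3 ^ t + 2 := by
        rw [abs_le]
        rcases hc with rfl | rfl <;> rcases he with rfl | rfl <;> constructor <;> nlinarith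
      nlinarith [pow_succ (3:ℤ) t, abs_le.mp habs]
    have ht0 : t = 0 := by
      by_contra htn
      have : (3:ℤ) ^ 1 ≤ 3 ^ t := pow_le_pow_right₀ (by norm_num) (by omega)
      rcases hc with rfl | rfl <;> rcases he with rfl | rfl <;> nlinarith
    subst ht0
    simp at hz
    constructor
    · omega
    · rfl
  · exfalso
    obtain ⟨r, rfl⟩ : ∃ r, t = s + r := ⟨t - s, by omega⟩
    have hr : r < s := by omega
    have hm : (3:ℤ) ^ s ≡ -1 [ZMOD ((3:ℤ) ^ s + 1)] :=
      Int.ModEq.symm (Int.modEq_iff_dvd.mpr ⟨1, by ring⟩)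
    have H2 : c * 3 ^ (s + r) ≡ c * (-1) * 3 ^ r [ZMOD ((3:ℤ) ^ s + 1)] := by
      have : (3:ℤ) ^ (s+r) = 3 ^ s * 3 ^ r := pow_add 3 s r
      calc c * 3 ^ (s+r) = (c * 3 ^ r) * 3 ^ s := by rw [this]; ring
        _ ≡ (c * 3 ^ r) * (-1) [ZMOD _] := hm.mul_left _
        _ = c * (-1) * 3 ^ r := by ring
    have H3 : c * (-1) * 3 ^ r ≡ e [ZMOD ((3:ℤ) ^ s + 1)] := H2.symm.trans H
    have hd : ((3:ℤ) ^ s + 1) ∣ (e + c * 3 ^ r) := by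
      have := Int.ModEq.dvd H3
      have heq : e - c * (-1) * 3 ^ r = e + c * 3 ^ r := by ring
      rwa [heq] at this
    have h3r : (3:ℤ) ^ (r+1) ≤ 3 ^ s := pow_le_pow_right₀ (by norm_num) hr
    have h3rpos : (0:ℤ) < 3 ^ r := by positivity
    have hpos : 0 < e + c * 3 ^ r := by
      rcases hc with rfl | rfl <;> rcases he with rfl | rfl <;> nlinarith
    have := Int.le_of_dvd hpos hd
    rcases hc with rfl | rfl <;> rcases he with rfl | rfl <;> nlinarith [pow_succ (3:ℤ) r]


private lemma aux_4s (s : ℕ) (hs : 2 ≤ s) : 4 * s ≤ 3 ^ s := by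
  induction s, hs using Nat.le_induction with
  | base => norm_num
  | succ m hm ih =>
    have h9 : 9 ≤ 3 ^ m := by calc (9:ℕ) = 3^2 := by norm_num
                                   _ ≤ 3^m := Nat.pow_le_pow_right (by norm_num) hm
    have : 3 ^ (m+1) = 3 * 3 ^ m := by rw [pow_succ]; ring
    omega

-- multiply a ≡-relation to normal form and apply core
private lemma aux_red (s : ℕ) (hs : 2 ≤ s) (c e : ℤ) (hc : c = 1 ∨ c = 2)
    (he : e = 1 ∨ e = 2) (i j : ℕ) (hi : i < 2*s) (hj : j < 2*s)
    (H : c * 3 ^ i ≡ e * 3 ^ j [ZMOD ((3:ℤ) ^ s + 1)]) :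
    c = e ∧ (i + (2*s - j)) % (2*s) = 0 := by
  have h2s : (3:ℤ) ^ (2*s) ≡ 1 [ZMOD ((3:ℤ) ^ s + 1)] := by
    apply Int.ModEq.symm
    apply Int.modEq_iff_dvd.mpr
    exact ⟨3 ^ s - 1, by rw [two_mul, pow_add]; ring⟩
  have H1 : c * 3 ^ (i + (2*s - j)) ≡ e * 3 ^ (2*s) [ZMOD ((3:ℤ) ^ s + 1)] := by
    have := H.mul_right ((3:ℤ) ^ (2*s - j))
    calc c * 3 ^ (i + (2*s - j)) = c * 3 ^ i * 3 ^ (2*s - j) := by rw [pow_add]; ring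
      _ ≡ e * 3 ^ j * 3 ^ (2*s - j) [ZMOD _] := this
      _ = e * 3 ^ (j + (2*s - j)) := by rw [pow_add]; ring
      _ = e * 3 ^ (2*s) := by rw [Nat.add_sub_cancel' hj.le]
  set m := i + (2*s - j) with hm
  have hsplit : m = 2*s * (m / (2*s)) + m % (2*s) := (Nat.div_add_mod m (2*s)).symm
  have H2 : c * 3 ^ (m % (2*s)) ≡ e [ZMOD ((3:ℤ) ^ s + 1)] := by
    have hpow : (3:ℤ) ^ m = ((3:ℤ) ^ (2*s)) ^ (m / (2*s)) * 3 ^ (m % (2*s)) := by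
      rw [← pow_mul, ← pow_add, ← hsplit]
    have h1 : ((3:ℤ) ^ (2*s)) ^ (m / (2*s)) ≡ 1 ^ (m / (2*s)) [ZMOD ((3:ℤ) ^ s + 1)] :=
      h2s.pow _
    have h2 : c * 3 ^ m ≡ c * 3 ^ (m % (2*s)) [ZMOD ((3:ℤ) ^ s + 1)] := by
      calc c * 3 ^ m = c * 3 ^ (m % (2*s)) * ((3:ℤ) ^ (2*s)) ^ (m / (2*s)) := by
            rw [hpow]; ring
        _ ≡ c * 3 ^ (m % (2*s)) * 1 ^ (m / (2*s)) [ZMOD _] := h1.mul_left _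
        _ = c * 3 ^ (m % (2*s)) := by ring
    have h3 : e * 3 ^ (2*s) ≡ e * 1 [ZMOD ((3:ℤ) ^ s + 1)] := h2s.mul_left e
    have := (h2.symm.trans H1).trans h3
    simpa using this
  have := aux_core s hs c e hc he (m % (2*s)) (Nat.mod_lt _ (by omega)) H2
  exact ⟨this.1, this.2⟩

private lemma aux_teq (s ti tj : ℕ) (hs : 2 ≤ s) (hti : ti < 2*s) (htj : tj < 2*s)
    (H : (ti + (2*s - tj)) % (2*s) = 0) : ti = tj := by
  obtain ⟨k, hk⟩ := Nat.dvd_of_mod_eq_zero H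
  have hb : 2*s*k < 2*s*2 := by omega
  have : k < 2 := lt_of_mul_lt_mul_left hb (by omega)
  interval_cases k <;> omega


private def auxE (s h : ℕ) : ℕ → ℕ := fun i => if i < 2*s then 3^i * h else 3^(i - 2*s) * (h+1)

private lemma auxE_dvd (q h : ℕ) (hq1 : (q:ℤ)+1 = 2*((h:ℤ)+2)) (cc x : ℤ)
    (hcx : cc + x = (h:ℤ)+2) (t : ℕ) :
    ((q:ℤ)+1) ∣ ((((h:ℤ)+2) - cc*3^t) - 3^t * x) := by
  obtain ⟨m, hm⟩ : (2:ℤ) ∣ 3^t - 1 := by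
    have h31 : (3:ℤ) ≡ 1 [ZMOD 2] := by decide
    have := (h31.pow t).symm
    simpa using Int.ModEq.dvd this
  exact ⟨-m, by linear_combination (-(h:ℤ)-2)*hm + m*hq1 + (-(3:ℤ)^t)*hcx⟩

private lemma auxE_modeq (s q h : ℕ) (hq1 : (q:ℤ)+1 = 2*((h:ℤ)+2)) (i : ℕ) :
    ((auxE s h i : ℕ) : ℤ) ≡ ((h:ℤ)+2) - (if i < 2*s then 2 else 1) *
      3^(if i < 2*s then i else i - 2*s) [ZMOD ((q:ℤ)+1)] := by
  by_cases hi2 : i < 2*s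
  · simp only [auxE, if_pos hi2]
    apply Int.modEq_iff_dvd.mpr
    have := auxE_dvd q h hq1 2 (h:ℤ) (by ring) i
    convert this using 2 <;> push_cast <;> ring
  · simp only [auxE, if_neg hi2]
    apply Int.modEq_iff_dvd.mpr
    have := auxE_dvd q h hq1 1 ((h:ℤ)+1) (by ring) (i - 2*s)
    convert this using 2 <;> push_cast <;> ring

private lemma auxE_inj (s q h : ℕ) (hs : 2 ≤ s) (hq : q = 3^s) (hh : 2*h = q-3)
    (i j : ℕ) (hi : i < 4*s) (hj : j < 4*s) (hne : i ≠ j) :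
    ¬ (((auxE s h i : ℕ) : ℤ) ≡ ((auxE s h j : ℕ) : ℤ) [ZMOD ((q:ℤ)+1)]) := by
  intro H
  have hq9 : 9 ≤ q := by
    subst hq
    calc 9 = 3^2 := rfl
    _ ≤ 3^s := Nat.pow_le_pow_right (by norm_num) hs
  have hq1 : (q:ℤ)+1 = 2*((h:ℤ)+2) := by omega
  have hmodM : ((q:ℤ)+1) = 3^s+1 := by subst hq; push_cast; ring
  have hmi := auxE_modeq s q h hq1 i
  have hmj := auxE_modeq s q h hq1 j
  have H2 := (hmi.symm.trans (H.trans hmj)).sub_left ((h:ℤ)+2)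
  set ci : ℤ := if i < 2*s then 2 else 1 with hci
  set cj : ℤ := if j < 2*s then 2 else 1 with hcj
  set ti : ℕ := if i < 2*s then i else i - 2*s with hti
  set tj : ℕ := if j < 2*s then j else j - 2*s with htj
  have e1 : ((h:ℤ)+2) - (((h:ℤ)+2) - ci*3^ti) = ci*3^ti := by ring
  have e2 : ((h:ℤ)+2) - (((h:ℤ)+2) - cj*3^tj) = cj*3^tj := by ring
  rw [e1, e2, hmodM] at H2
  have hcio : ci = 1 ∨ ci = 2 := by rw [hci]; split_ifs <;> simp
  have hcjo : cj = 1 ∨ cj = 2 := by rw [hcj]; split_ifs <;> simp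
  have htil : ti < 2*s := by rw [hti]; split_ifs <;> omega
  have htjl : tj < 2*s := by rw [htj]; split_ifs <;> omega
  obtain ⟨hceq, hmod0⟩ := aux_red s hs ci cj hcio hcjo ti tj htil htjl H2
  have hteq : ti = tj := aux_teq s ti tj hs htil htjl hmod0
  by_cases hi2 : i < 2*s <;> by_cases hj2 : j < 2*s
  · apply hne; rw [hti, htj, if_pos hi2, if_pos hj2] at hteq; exact hteq
  · rw [hci, hcj, if_pos hi2, if_neg hj2] at hceq; norm_num at hceq
  · rw [hci, hcj, if_neg hi2, if_pos hj2] at hceq; norm_num at hceq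
  · apply hne; rw [hti, htj, if_neg hi2, if_neg hj2] at hteq; omega

theorem stmt18 (s : ℕ) (hs : 2 ≤ s) (q : ℕ) (hq : q = 3 ^ s)
    (h : ℕ) (hh : 2 * h = q - 3)
    (K : Type) [Field K] [Fintype K] [DecidableEq K] (hK : Fintype.card K = q ^ 2)
    (β : K) (hβ : IsPrimitiveRoot β (q + 1))
    (T : Set (Fin (q + 1) → K))
    (hT : T = {c | (∀ j, (c j) ^ 3 = c j) ∧
      (∑ j : Fin (q + 1), c j * β ^ (h * (j : ℕ)) = 0) ∧
      (∑ j : Fin (q + 1), c j * β ^ ((h + 1) * (j : ℕ)) = 0)}) :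
    T.ncard = 3 ^ (q + 1 - 4 * s) ∧
    ∀ c ∈ T, c ≠ 0 → 4 ≤ hammingNorm c := by
  have hq9 : 9 ≤ q := by
    subst hq
    calc 9 = 3^2 := rfl
    _ ≤ 3^s := Nat.pow_le_pow_right (by norm_num) hs
  have hh3 : 3 ≤ h := by omega
  haveI hfact3 : Fact (Nat.Prime 3) := ⟨by norm_num⟩
  -- characteristic 3
  haveI hchar : CharP K 3 := by
    have hcp : CharP K (ringChar K) := ringChar.charP K
    have hprime : (ringChar K).Prime := CharP.char_is_prime K (ringChar K)
    obtain ⟨n, -, hcard⟩ := FiniteField.card K (ringChar K)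
    have h3 : ringChar K = 3 := by
      have hdvd : ringChar K ∣ 3 ^ (s*2) := by
        rw [pow_mul, ← hq, ← hK, hcard]
        exact dvd_pow_self _ (by exact_mod_cast n.ne_zero)
      exact (Nat.prime_dvd_prime_iff_eq hprime (by norm_num)).mp
        (hprime.dvd_of_dvd_pow hdvd)
    rw [← h3]; exact hcp
  have h3K : (3:K) = 0 := by exact_mod_cast CharP.cast_eq_zero K 3
  -- beta facts
  have hβ1 : β ^ (q+1) = 1 := hβ.pow_eq_one
  have hβ0 : β ≠ 0 := by
    intro h0
    rw [h0, zero_pow (by omega : q+1 ≠ 0)] at hβ1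
    exact zero_ne_one hβ1
  have hbridge : ∀ x y : ℕ, β ^ x = β ^ y → ((x:ℤ) ≡ (y:ℤ) [ZMOD ((q:ℤ)+1)]) := by
    have key : ∀ x y : ℕ, y ≤ x → β ^ x = β ^ y → ((q+1) ∣ x - y) := by
      intro x y hyx hxy
      have h1 : β ^ (x - y) * β ^ y = 1 * β ^ y := by
        rw [← pow_add, Nat.sub_add_cancel hyx, hxy, one_mul]
      have h2 : β ^ (x - y) = 1 := mul_right_cancel₀ (pow_ne_zero _ hβ0) h1
      exact (hβ.pow_eq_one_iff_dvd _).mp h2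
    intro x y hxy
    rcases le_total y x with hyx | hyx
    · obtain ⟨m, hm⟩ := key x y hyx hxy
      apply Int.ModEq.symm
      apply Int.modEq_iff_dvd.mpr
      refine ⟨m, ?_⟩
      have : x = (q+1) * m + y := by omega
      push_cast [this]; push_cast; ring
    · obtain ⟨m, hm⟩ := key y x hyx hxy.symm
      apply Int.modEq_iff_dvd.mpr
      refine ⟨m, ?_⟩
      have : y = (q+1) * m + x := by omega
      push_cast [this]; push_cast; ring
  subst hT
  -- general Frobenius step for checks
  have hfrob : ∀ (c : Fin (q+1) → K), (∀ j, (c j)^3 = c j) → ∀ m : ℕ,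
      (∑ j : Fin (q+1), c j * β ^ (m * (j:ℕ)) = 0) →
      (∑ j : Fin (q+1), c j * β ^ ((3*m) * (j:ℕ)) = 0) := by
    intro c hc1 m hm
    have hcube := congrArg (frobenius K 3) hm
    rw [map_sum, map_zero] at hcube
    rw [← hcube]
    apply Finset.sum_congr rfl
    intro j _
    rw [frobenius_def, mul_pow, hc1 j, ← pow_mul]
    congr 1
    ring
  have hP : ∀ (c : Fin (q+1) → K), (∀ j, (c j)^3 = c j) →
      (∑ j : Fin (q+1), c j * β ^ (h * (j:ℕ)) = 0) →
      (∑ j : Fin (q+1), c j * β ^ ((h+1) * (j:ℕ)) = 0) →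
      ∀ i : ℕ, i < 4*s → ∑ j : Fin (q+1), c j * β ^ (auxE s h i * (j:ℕ)) = 0 := by
    intro c hc1 hk1 hk2 i hi
    have hP1 : ∀ i : ℕ, ∑ j : Fin (q+1), c j * β ^ ((3^i * h) * (j:ℕ)) = 0 := by
      intro i
      induction i with
      | zero => simpa using hk1
      | succ i ih =>
        have hstep := hfrob c hc1 (3^i*h) ih
        have hexp : 3*(3^i*h) = 3^(i+1)*h := by rw [pow_succ]; ring
        rwa [hexp] at hstep
    have hP2 : ∀ i : ℕ, ∑ j : Fin (q+1), c j * β ^ ((3^i * (h+1)) * (j:ℕ)) = 0 := by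
      intro i
      induction i with
      | zero => simpa using hk2
      | succ i ih =>
        have hstep := hfrob c hc1 (3^i*(h+1)) ih
        have hexp : 3*(3^i*(h+1)) = 3^(i+1)*(h+1) := by rw [pow_succ]; ring
        rwa [hexp] at hstep
    by_cases hi2 : i < 2*s
    · have := hP1 i; simpa [auxE, if_pos hi2] using this
    · have := hP2 (i - 2*s); simpa [auxE, if_neg hi2] using this
  -- gamma facts
  have hγn : ∀ i : ℕ, (β ^ auxE s h i) ^ (q+1) = 1 := by
    intro i; rw [← pow_mul, mul_comm, pow_mul, hβ1, one_pow]
  have hγ0 : ∀ i : ℕ, β ^ auxE s h i ≠ 0 := fun i => pow_ne_zero _ hβ0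
  have hγinj : ∀ i i' : ℕ, i < 4*s → i' < 4*s → β ^ auxE s h i = β ^ auxE s h i' → i = i' := by
    intro i i' hi hi' heq
    by_contra hne
    exact auxE_inj s q h hs hq hh i i' hi hi' hne (hbridge _ _ heq)
  have hq0K : ((q:ℕ):K) = 0 := by
    have hq3 : q = 3 * 3^(s-1) := by
      subst hq
      rw [← pow_succ']
      congr 1
      omega
    rw [hq3]
    push_cast
    rw [h3K]
    ring
  have hNK : (((q+1:ℕ)):K) = 1 := by push_cast; rw [hq0K]; ring
  have hgeom : ∀ z : K, z ^ (q+1) = 1 → z ≠ 1 → ∑ j : Fin (q+1), z ^ (j:ℕ) = 0 := by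
    intro z h1 hz
    rw [Fin.sum_univ_eq_sum_range (fun j => z ^ j) (q+1), geom_sum_eq hz, h1]
    simp
  have hones : ∑ j : Fin (q+1), (1:K) ^ (j:ℕ) = 1 := by
    calc ∑ j : Fin (q+1), (1:K) ^ (j:ℕ) = ∑ _j : Fin (q+1), (1:K) := by simp
    _ = ((q+1:ℕ):K) := by simp [Finset.sum_const, Finset.card_univ, nsmul_eq_mul]
    _ = 1 := hNK
  set TS : Set (Fin (q + 1) → K) := {c | (∀ j, (c j) ^ 3 = c j) ∧
      (∑ j : Fin (q + 1), c j * β ^ (h * (j : ℕ)) = 0) ∧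
      (∑ j : Fin (q + 1), c j * β ^ ((h + 1) * (j : ℕ)) = 0)} with hTSdef
  constructor
  · -- cardinality
    set cols : Fin (q+1) → (Fin (4*s) → K) :=
      fun j i => (β ^ auxE s h (i:ℕ)) ^ (j:ℕ) with hcols
    have hsingle : ∀ i0 : Fin (4*s), (Pi.single i0 (1:K) : Fin (4*s) → K) ∈
        Submodule.span K (Set.range cols) := by
      intro i0
      have hrep : (Pi.single i0 (1:K) : Fin (4*s) → K)
          = ∑ j : Fin (q+1), ((β ^ auxE s h (i0:ℕ))⁻¹) ^ (j:ℕ) • cols j := by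
        funext i
        rw [Finset.sum_apply]
        have hterm : ∀ j : Fin (q+1), (((β ^ auxE s h (i0:ℕ))⁻¹) ^ (j:ℕ) • cols j) i
            = (β ^ auxE s h (i:ℕ) * (β ^ auxE s h (i0:ℕ))⁻¹) ^ (j:ℕ) := by
          intro j
          simp only [hcols, Pi.smul_apply, smul_eq_mul, mul_pow]
          ring
        rw [Finset.sum_congr rfl (fun j _ => hterm j)]
        by_cases hii : i = i0
        · subst hii
          rw [mul_inv_cancel₀ (hγ0 _), hones, Pi.single_eq_same]
        · have hz1 : β ^ auxE s h (i:ℕ) * (β ^ auxE s h (i0:ℕ))⁻¹ ≠ 1 := by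
            intro hz
            exact hii (Fin.ext (hγinj _ _ i.isLt i0.isLt
              ((mul_inv_eq_one₀ (hγ0 _)).mp hz)))
          have hzN : (β ^ auxE s h (i:ℕ) * (β ^ auxE s h (i0:ℕ))⁻¹) ^ (q+1) = 1 := by
            rw [mul_pow, inv_pow, hγn, hγn, inv_one, mul_one]
          rw [hgeom _ hzN hz1, Pi.single_eq_of_ne hii]
      rw [hrep]
      exact Submodule.sum_mem _ fun j _ =>
        Submodule.smul_mem _ _ (Submodule.subset_span ⟨j, rfl⟩)
    have hspanTop : Submodule.span K (Set.range cols) = ⊤ := by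
      rw [eq_top_iff]
      rintro x -
      have hx := pi_eq_sum_univ x
      rw [hx]
      apply Submodule.sum_mem
      intro i _
      apply Submodule.smul_mem
      have hif : (fun j => if i = j then (1:K) else 0) = Pi.single i (1:K) := by
        funext j
        by_cases hij : i = j
        · subst hij; simp
        · simp [hij, Pi.single_eq_of_ne (Ne.symm hij)]
      rw [hif]
      exact hsingle i
    obtain ⟨b, hbsub, hbspan, hbind⟩ := exists_linearIndependent K (Set.range cols)
    have hbfin : b.Finite := (Set.finite_range cols).subset hbsub
    haveI := hbfin.fintype
    have hbcard : b.toFinset.card = 4*s := by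
      have hfr := finrank_span_set_eq_card hbind
      rw [hbspan, hspanTop] at hfr
      rw [← hfr, finrank_top, Module.finrank_pi, Fintype.card_fin]
    have hsel : ∀ x : ↥b, ∃ j : Fin (q+1), cols j = ↑x := fun x => hbsub x.2
    choose g' hg' using hsel
    have hg'inj : Function.Injective g' := by
      intro x y hxy
      apply Subtype.ext
      rw [← hg' x, ← hg' y, hxy]
    set Sc : Finset (Fin (q+1)) := Finset.image g' Finset.univ with hScdef
    have hScCard : Sc.card = 4*s := by
      rw [hScdef, Finset.card_image_of_injective _ hg'inj, Finset.card_univ]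
      rw [← Set.toFinset_card]
      exact hbcard
    have hkey : ∀ dd : Fin (q+1) → K, (∀ j, j ∉ Sc → dd j = 0) →
        (∀ i : Fin (4*s), ∑ j : Fin (q+1), dd j * cols j i = 0) → dd = 0 := by
      intro dd hd0 hdchk
      have h1 : ∑ j : Fin (q+1), dd j • cols j = 0 := by
        funext i
        simp only [Finset.sum_apply, Pi.smul_apply, smul_eq_mul, Pi.zero_apply]
        exact hdchk i
      have h2 : ∑ j ∈ Sc, dd j • cols j = ∑ j : Fin (q+1), dd j • cols j :=
        Finset.sum_subset (Finset.subset_univ Sc)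
          (fun j _ hj => by rw [hd0 j hj, zero_smul])
      have h3 : ∑ j ∈ Sc, dd j • cols j
          = ∑ x : ↥b, dd (g' x) • (x : Fin (4*s) → K) := by
        rw [hScdef, Finset.sum_image (fun x _ y _ hxy => hg'inj hxy)]
        apply Finset.sum_congr rfl
        intro x _
        rw [hg' x]
      have hvec : ∑ x : ↥b, dd (g' x) • (x : Fin (4*s) → K) = 0 := by
        rw [← h3, h2, h1]
      have hzero := Fintype.linearIndependent_iff.mp hbind (fun x => dd (g' x)) hvec
      funext j
      show dd j = 0
      by_cases hj : j ∈ Sc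
      · rw [hScdef] at hj
        obtain ⟨x, -, hx⟩ := Finset.mem_image.mp hj
        rw [← hx]
        exact hzero x
      · exact hd0 j hj
    -- roots of x^3 = x
    have hroots : ∀ x : K, x ^ 3 = x → x = 0 ∨ x = 1 ∨ x = -1 := by
      intro x hx
      have hfac : x * ((x - 1) * (x + 1)) = 0 := by linear_combination hx
      rcases mul_eq_zero.mp hfac with h0 | h0
      · exact Or.inl h0
      · rcases mul_eq_zero.mp h0 with h0 | h0
        · exact Or.inr (Or.inl (sub_eq_zero.mp h0))
        · exact Or.inr (Or.inr (eq_neg_of_add_eq_zero_left h0))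
    have h1neg : (1:K) ≠ -1 := by
      intro h1
      have : (1:K) = 0 := by linear_combination h3K - h1
      exact one_ne_zero this
    have hrootcard : Nat.card {x : K // x ^ 3 = x} = 3 := by
      have e1 : Nat.card {x : K // x ^ 3 = x} = ({x : K | x ^ 3 = x}).ncard :=
        Nat.card_coe_set_eq _
      have hseteq : {x : K | x ^ 3 = x} = {0, 1, -1} := by
        ext x
        simp only [Set.mem_setOf_eq, Set.mem_insert_iff, Set.mem_singleton_iff]
        constructor
        · exact hroots x
        · rintro (rfl | rfl | rfl) <;> ring
      have h0nm : (0:K) ∉ ({1, -1} : Set K) := by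
        simp only [Set.mem_insert_iff, Set.mem_singleton_iff]
        push_neg
        constructor
        · exact fun h0 => (one_ne_zero : (1:K) ≠ 0) h0.symm
        · intro h0
          apply (one_ne_zero : (1:K) ≠ 0)
          linear_combination h0
      rw [e1, hseteq, Set.ncard_insert_of_notMem h0nm, Set.ncard_pair h1neg]
    -- upper bound: injection from TS
    have hinj : Function.Injective (fun (c : ↥TS) (j : {j : Fin (q+1) // j ∉ Sc}) =>
        (⟨c.1 j.1, c.2.1 j.1⟩ : {x : K // x ^ 3 = x})) := by
      intro c c' hcc
      apply Subtype.ext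
      have hdd := hkey (fun j => c.1 j - c'.1 j) ?_ ?_
      · funext j
        have := congrFun hdd j
        simpa [sub_eq_zero] using this
      · intro j hj
        have := congrFun hcc ⟨j, hj⟩
        simp only [Subtype.mk.injEq] at this
        simp [this, sub_eq_zero]
      · intro i
        have hA := hP c.1 c.2.1 c.2.2.1 c.2.2.2 (i:ℕ) i.isLt
        have hB := hP c'.1 c'.2.1 c'.2.2.1 c'.2.2.2 (i:ℕ) i.isLt
        have hsplit : ∑ j : Fin (q+1), (c.1 j - c'.1 j) * cols j i
            = (∑ j : Fin (q+1), c.1 j * β ^ (auxE s h (i:ℕ) * (j:ℕ)))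
              - (∑ j : Fin (q+1), c'.1 j * β ^ (auxE s h (i:ℕ) * (j:ℕ))) := by
          rw [← Finset.sum_sub_distrib]
          apply Finset.sum_congr rfl
          intro j _
          simp only [hcols]
          rw [pow_mul]
          ring
        rw [hsplit, hA, hB, sub_zero]
    have hupper : Nat.card ↥TS ≤ 3 ^ (q+1-4*s) := by
      have hcard_le := Nat.card_le_card_of_injective _ hinj
      have htarget : Nat.card ({j : Fin (q+1) // j ∉ Sc} → {x : K // x ^ 3 = x})
          = 3 ^ (q+1-4*s) := by
        rw [Nat.card_eq_fintype_card, Fintype.card_fun]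
        congr 1
        · rw [← Nat.card_eq_fintype_card, hrootcard]
        · rw [Fintype.card_subtype_compl, Fintype.card_fin, Fintype.card_coe, hScCard]
      rw [← htarget]
      exact hcard_le
    -- lower bound via additive homomorphism
    set ι : ZMod 3 →+* K := ZMod.castHom dvd_rfl K with hιdef
    have hι : Function.Injective ι := ι.injective
    set φ : (Fin (q+1) → ZMod 3) →+ K × K := {
      toFun := fun cc => (∑ j : Fin (q+1), ι (cc j) * β ^ (h * (j:ℕ)),
                          ∑ j : Fin (q+1), ι (cc j) * β ^ ((h+1) * (j:ℕ))),
      map_zero' := by simp,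
      map_add' := by
        intro x y
        simp only [Pi.add_apply, map_add, add_mul, Finset.sum_add_distrib, Prod.mk_add_mk] } with hφdef
    have himg : (fun (cc : Fin (q+1) → ZMod 3) => (fun j => ι (cc j))) '' (φ.ker : Set _) = TS := by
      ext c
      constructor
      · rintro ⟨cc, hker, rfl⟩
        have hk0 : φ cc = 0 := hker
        have hfst := congrArg Prod.fst hk0
        have hsnd := congrArg Prod.snd hk0
        simp only [hφdef, AddMonoidHom.coe_mk, ZeroHom.coe_mk, Prod.fst_zero, Prod.snd_zero] at hfst hsnd
        exact ⟨fun j => by rw [← map_pow, ZMod.pow_card], hfst, hsnd⟩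
      · intro hcmem
        have hex : ∀ j, ∃ y : ZMod 3, ι y = c j := by
          intro j
          rcases hroots (c j) (hcmem.1 j) with h0 | h0 | h0
          · exact ⟨0, by rw [map_zero, h0]⟩
          · exact ⟨1, by rw [map_one, h0]⟩
          · exact ⟨-1, by rw [map_neg, map_one, h0]⟩
        choose cc hcc using hex
        refine ⟨cc, ?_, funext hcc⟩
        show φ cc = 0
        have e1 : ∑ j : Fin (q+1), ι (cc j) * β ^ (h * (j:ℕ)) = 0 := by
          rw [Finset.sum_congr rfl (fun j _ => by rw [hcc j])]
          exact hcmem.2.1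
        have e2 : ∑ j : Fin (q+1), ι (cc j) * β ^ ((h+1) * (j:ℕ)) = 0 := by
          rw [Finset.sum_congr rfl (fun j _ => by rw [hcc j])]
          exact hcmem.2.2
        simp only [hφdef, AddMonoidHom.coe_mk, ZeroHom.coe_mk, Prod.mk_eq_zero]
        exact ⟨e1, e2⟩
    have himginj : Function.Injective
        (fun (cc : Fin (q+1) → ZMod 3) => (fun j => ι (cc j) : Fin (q+1) → K)) := by
      intro x y hxy
      funext j
      exact hι (congrFun hxy j)
    have hTcard : TS.ncard = Nat.card ↥φ.ker := by
      rw [← himg, Set.ncard_image_of_injective _ himginj, ← Nat.card_coe_set_eq]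
      rfl
    have hlag : (3:ℕ) ^ (q+1) = Nat.card ↥φ.range * Nat.card ↥φ.ker := by
      have h1 := AddSubgroup.card_eq_card_quotient_mul_card_addSubgroup φ.ker
      have h2 : Nat.card ((Fin (q+1) → ZMod 3) ⧸ φ.ker) = Nat.card ↥φ.range :=
        Nat.card_congr (QuotientAddGroup.quotientKerEquivRange φ).toEquiv
      rw [← h2, ← h1, Nat.card_eq_fintype_card, Fintype.card_fun, ZMod.card, Fintype.card_fin]
    have hrange_le : Nat.card ↥φ.range ≤ 3 ^ (4*s) := by
      have hle := Nat.card_le_card_of_injective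
        (Subtype.val : ↥φ.range → K × K) Subtype.val_injective
      have hKK : Nat.card (K × K) = 3 ^ (4*s) := by
        rw [Nat.card_eq_fintype_card, Fintype.card_prod, hK, hq,
          ← pow_mul, ← pow_add]
        congr 1
        ring
      rw [hKK] at hle
      exact hle
    have h4sq : 4*s ≤ q := by rw [hq]; exact aux_4s s hs
    have hker_le : Nat.card ↥φ.ker ≤ 3 ^ (q+1-4*s) := by
      rw [← hTcard]
      rw [← Nat.card_coe_set_eq]
      exact hupper
    have hpowsplit : (3:ℕ) ^ (q+1) = 3 ^ (4*s) * 3 ^ (q+1-4*s) := by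
      rw [← pow_add]
      congr 1
      omega
    have hRge : 3 ^ (4*s) ≤ Nat.card ↥φ.range := by
      have hstep : (3:ℕ) ^ (q+1) ≤ Nat.card ↥φ.range * 3 ^ (q+1-4*s) := by
        rw [hlag]
        exact Nat.mul_le_mul_left _ hker_le
      rw [hpowsplit] at hstep
      exact Nat.le_of_mul_le_mul_right hstep (by positivity)
    have hReq : Nat.card ↥φ.range = 3 ^ (4*s) := le_antisymm hrange_le hRge
    have hfinal : Nat.card ↥φ.ker = 3 ^ (q+1-4*s) := by
      apply Nat.eq_of_mul_eq_mul_left (show 0 < 3^(4*s) by positivity)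
      rw [← hReq, ← hlag, hpowsplit, hReq]
    rw [hTcard, hfinal]
  · -- minimum distance
    intro c hc hc0
    by_contra hlt
    push_neg at hlt
    have hc1 : ∀ j, (c j)^3 = c j := hc.1
    have hck1 : ∑ j : Fin (q+1), c j * β ^ (h * (j:ℕ)) = 0 := hc.2.1
    have hck2 : ∑ j : Fin (q+1), c j * β ^ ((h+1) * (j:ℕ)) = 0 := hc.2.2
    -- Frobenius gives check at exponent 3*(h+1) = (q+1) + (h-1)
    have hck3 : ∑ j : Fin (q+1), c j * β ^ ((3*(h+1)) * (j:ℕ)) = 0 := by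
      have hcube := congrArg (frobenius K 3) hck2
      rw [map_sum, map_zero] at hcube
      rw [← hcube]
      apply Finset.sum_congr rfl
      intro j _
      rw [frobenius_def, mul_pow, hc1 j, ← pow_mul]
      congr 1
      ring
    obtain ⟨k, hhk⟩ : ∃ k, h = k + 1 := ⟨h - 1, by omega⟩
    have hck0 : ∑ j : Fin (q+1), c j * β ^ (k * (j:ℕ)) = 0 := by
      rw [← hck3]
      apply Finset.sum_congr rfl
      intro j _
      have hex : (3*(h+1)) * (j:ℕ) = (q+1) * (j:ℕ) + k * (j:ℕ) := by
        have : 3*(h+1) = (q+1) + k := by omega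
        rw [this]; ring
      have hterm : β ^ ((3*(h+1)) * (j:ℕ)) = β ^ (k * (j:ℕ)) := by
        rw [hex, pow_add, pow_mul, hβ1, one_pow, one_mul]
      rw [hterm]
    -- support inside a 3-element set
    have hSu : (Finset.univ.filter (fun j => c j ≠ 0)).card ≤ 3 := by
      have : hammingNorm c ≤ 3 := by omega
      simpa [hammingNorm, Finset.filter] using this
    obtain ⟨t, hsub, ht3⟩ := Finset.exists_superset_card_eq hSu
      (by simp [Fintype.card_fin]; omega)
    obtain ⟨a, b, d, hab, had, hbd, rfl⟩ := Finset.card_eq_three.mp ht3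
    have hczero : ∀ j : Fin (q+1), j ∉ ({a, b, d} : Finset (Fin (q+1))) → c j = 0 := by
      intro j hj
      by_contra hne
      exact hj (hsub (Finset.mem_filter.mpr ⟨Finset.mem_univ _, hne⟩))
    have hres : ∀ m : ℕ, (∑ j : Fin (q+1), c j * β ^ (m * (j:ℕ)))
        = c a * (β^(a:ℕ))^m + c b * (β^(b:ℕ))^m + c d * (β^(d:ℕ))^m := by
      intro m
      rw [← Finset.sum_subset (Finset.subset_univ ({a,b,d} : Finset (Fin (q+1))))
        (fun j _ hj => by rw [hczero j hj, zero_mul])]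
      rw [Finset.sum_insert (by simp [hab, had]),
        Finset.sum_insert (by simp [hbd]), Finset.sum_singleton]
      have hrw : ∀ j : Fin (q+1), β ^ (m * (j:ℕ)) = (β^(j:ℕ))^m := by
        intro j; rw [mul_comm, pow_mul]
      rw [hrw a, hrw b, hrw d]
      ring
    set u := β ^ (a:ℕ) with hu
    set v := β ^ (b:ℕ) with hv
    set w := β ^ (d:ℕ) with hw
    have e1 : c a * u^k + c b * v^k + c d * w^k = 0 := by rw [← hres k]; exact hck0
    have e2 : c a * u^(k+1) + c b * v^(k+1) + c d * w^(k+1) = 0 := by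
      rw [← hhk, ← hres h]; exact hck1
    have e3 : c a * u^(k+2) + c b * v^(k+2) + c d * w^(k+2) = 0 := by
      have : h + 1 = k + 2 := by omega
      rw [← this, ← hres (h+1)]; exact hck2
    have hdist : ∀ x y : Fin (q+1), x ≠ y → β^(x:ℕ) ≠ β^(y:ℕ) := by
      intro x y hxy heq
      exact hxy (Fin.ext (hβ.pow_inj x.isLt y.isLt heq))
    have hu0 : u ≠ 0 := pow_ne_zero _ hβ0
    have hv0 : v ≠ 0 := pow_ne_zero _ hβ0
    have hw0 : w ≠ 0 := pow_ne_zero _ hβ0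
    have huv : u ≠ v := hdist a b hab
    have huw : u ≠ w := hdist a d had
    have hvw : v ≠ w := hdist b d hbd
    have hca : c a = 0 := by
      have hz : c a * (u^k * ((u - v) * (u - w))) = 0 := by
        linear_combination e3 - (v+w)*e2 + (v*w)*e1
      rcases mul_eq_zero.mp hz with h0 | h0
      · exact h0
      · exfalso
        rcases mul_eq_zero.mp h0 with h0 | h0
        · exact pow_ne_zero _ hu0 h0
        · rcases mul_eq_zero.mp h0 with h0 | h0
          · exact huv (sub_eq_zero.mp h0)
          · exact huw (sub_eq_zero.mp h0)
    have hcb : c b = 0 := by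
      have hz : c b * (v^k * ((v - u) * (v - w))) = 0 := by
        linear_combination e3 - (u+w)*e2 + (u*w)*e1
      rcases mul_eq_zero.mp hz with h0 | h0
      · exact h0
      · exfalso
        rcases mul_eq_zero.mp h0 with h0 | h0
        · exact pow_ne_zero _ hv0 h0
        · rcases mul_eq_zero.mp h0 with h0 | h0
          · exact huv (sub_eq_zero.mp h0).symm
          · exact hvw (sub_eq_zero.mp h0)
    have hcd : c d = 0 := by
      have hz : c d * (w^k * ((w - u) * (w - v))) = 0 := by
        linear_combination e3 - (u+v)*e2 + (u*v)*e1
      rcases mul_eq_zero.mp hz with h0 | h0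
      · exact h0
      · exfalso
        rcases mul_eq_zero.mp h0 with h0 | h0
        · exact pow_ne_zero _ hw0 h0
        · rcases mul_eq_zero.mp h0 with h0 | h0
          · exact huw (sub_eq_zero.mp h0).symm
          · exact hvw (sub_eq_zero.mp h0).symm
    apply hc0
    funext j
    by_cases hj : j ∈ ({a,b,d} : Finset (Fin (q+1)))
    · rcases Finset.mem_insert.mp hj with rfl | hj'
      · exact hca
      · rcases Finset.mem_insert.mp hj' with rfl | hj''
        · exact hcb
        · rw [Finset.mem_singleton.mp hj'']; exact hcd
    · exact hczero j hj
end

section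
/- Let s ≥ 4 be an integer. Then the least positive integer ℓ such that 2^s + 1 divides 3·(2^ℓ − 1) (equivalently, such that 3·2^ℓ ≡ 3 (mod 2^s + 1)) is ℓ = 2s. In other words, the 2-cyclotomic coset of 3 modulo 2^s + 1 has size 2s. -/
theorem stmt19 (s : ℕ) (hs : 4 ≤ s) :
    IsLeast {ℓ : ℕ | 0 < ℓ ∧ (2 ^ s + 1) ∣ 3 * (2 ^ ℓ - 1)} (2 * s) := by
  have hq : (8 : ℕ) ≤ 2 ^ (s - 1) := by
    calc (8 : ℕ) = 2 ^ 3 := by norm_num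
    _ ≤ 2 ^ (s - 1) := Nat.pow_le_pow_right (by norm_num) (by omega)
  have hq4 : (4 : ℕ) ∣ 2 ^ (s - 1) := by
    have : (2:ℕ) ^ 2 ∣ 2 ^ (s - 1) := pow_dvd_pow 2 (by omega)
    simpa using this
  have haq : 2 ^ s = 2 * 2 ^ (s - 1) := by
    rw [← pow_succ']; congr 1; omega
  constructor
  · refine ⟨by omega, ?_⟩
    have h1 : (1 : ℕ) ≤ 2 ^ s := Nat.one_le_two_pow
    refine ⟨3 * (2 ^ s - 1), ?_⟩
    have h2 : 2 ^ (2 * s) = 2 ^ s * 2 ^ s := by rw [two_mul, pow_add]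
    zify [h1, Nat.one_le_two_pow (n := 2 * s)]
    have h2' : (2 : ℤ) ^ (2 * s) = 2 ^ s * 2 ^ s := by exact_mod_cast h2
    linear_combination 3 * h2'
  · rintro ℓ ⟨hpos, hdvd⟩
    by_contra hlt
    push_neg at hlt
    by_cases hcase : ℓ < s
    · -- small case: 3*(2^ℓ - 1) = 2^s + 1
      have hp1 : (2 : ℕ) ≤ 2 ^ ℓ := by
        calc (2:ℕ) = 2 ^ 1 := by norm_num
        _ ≤ 2 ^ ℓ := Nat.pow_le_pow_right (by norm_num) hpos
      have hple : 2 ^ ℓ ≤ 2 ^ (s - 1) := Nat.pow_le_pow_right (by norm_num) (by omega)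
      have hm : 3 * (2 ^ ℓ - 1) = 2 ^ s + 1 := by
        apply Nat.eq_of_dvd_of_lt_two_mul (by omega) hdvd
        omega
      -- now 3 * 2^ℓ = 2^s + 4 = 2 * 2^(s-1) + 4
      by_cases h3 : 3 ≤ ℓ
      · have h8 : (8 : ℕ) ∣ 2 ^ ℓ := by
          have : (2:ℕ) ^ 3 ∣ 2 ^ ℓ := pow_dvd_pow 2 h3
          simpa using this
        omega
      · have hple2 : 2 ^ ℓ ≤ 4 := by
          calc 2 ^ ℓ ≤ 2 ^ 2 := Nat.pow_le_pow_right (by norm_num) (by omega)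
          _ = 4 := by norm_num
        have h2d : (2 : ℕ) ∣ 2 ^ ℓ := dvd_pow_self 2 (by omega)
        omega
    · -- large case: s ≤ ℓ < 2s
      push_neg at hcase
      set k := ℓ - s with hk
      have hkle : k ≤ s - 1 := by omega
      have h1 : (1 : ℕ) ≤ 2 ^ ℓ := Nat.one_le_two_pow
      have h2 : 2 ^ ℓ = 2 ^ k * 2 ^ s := by rw [← pow_add]; congr 1; omega
      have h3 : 3 * (2 ^ ℓ - 1) + 3 * (2 ^ k + 1) = (2 ^ s + 1) * (3 * 2 ^ k) := by
        zify [h1]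
        have h2' : (2 : ℤ) ^ ℓ = 2 ^ k * 2 ^ s := by exact_mod_cast h2
        linear_combination 3 * h2'
      have hdvd2 : (2 ^ s + 1) ∣ 3 * (2 ^ k + 1) := by
        have hsum : (2 ^ s + 1) ∣ 3 * (2 ^ ℓ - 1) + 3 * (2 ^ k + 1) := ⟨3 * 2 ^ k, h3⟩
        exact (Nat.dvd_add_right hdvd).mp hsum
      have htle : 2 ^ k ≤ 2 ^ (s - 1) := Nat.pow_le_pow_right (by norm_num) hkle
      have ht1 : (1 : ℕ) ≤ 2 ^ k := Nat.one_le_two_pow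
      have hm : 3 * (2 ^ k + 1) = 2 ^ s + 1 := by
        apply Nat.eq_of_dvd_of_lt_two_mul (by omega) hdvd2
        omega
      by_cases hk2 : 2 ≤ k
      · have h4 : (4 : ℕ) ∣ 2 ^ k := by
          have : (2:ℕ) ^ 2 ∣ 2 ^ k := pow_dvd_pow 2 hk2
          simpa using this
        omega
      · have hkle2 : 2 ^ k ≤ 2 := by
          calc 2 ^ k ≤ 2 ^ 1 := Nat.pow_le_pow_right (by norm_num) (by omega)
          _ = 2 := by norm_num
        omega
end
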